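/- arXiv:1505.05054 — 4 statements merged into one kernel-verified Lean document; each statement's English description precedes it below -/
import Mathlib

section
/- With F ∈ ℚ[X,Y,Z] a square-free homogeneous polynomial with integer coefficients and q a prime with F_q ≠ 0, the total Tjurina number satisfies τ(Γ) ≤ τ(Γ_q), where Γ and Γ_q are the curves defined by F and its reduction F_q. -/
set_option synthInstance.maxHeartbeats 1000000
set_option maxHeartbeats 2000000

/-- The Hilbert function of the graded quotient `K[X,Y,Z]/J` at degree `t`:
the dimension of the image of the degree-`t` homogeneous part. -/
noncomputable def hilbertFn (K : Type) [Field K] (J : Ideal (MvPolynomial (Fin 3) K))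
    (t : ℕ) : ℕ :=
  Module.finrank K
    ((MvPolynomial.homogeneousSubmodule (Fin 3) K t).map
      (Ideal.Quotient.mkₐ K J).toLinearMap)

/-- The total Tjurina number of the projective plane curve defined by a homogeneous
polynomial `F`: the degree of `Proj(K[X,Y,Z]/⟨F_X,F_Y,F_Z⟩)`, i.e. the eventual
(limsup) value of the Hilbert function of the Tjurina algebra, as an extended
natural number. -/
noncomputable def totalTjurina (K : Type) [Field K] (F : MvPolynomial (Fin 3) K) : ℕ∞ :=
  Filter.limsup
    (fun t => (hilbertFn K
        (Ideal.span {MvPolynomial.pderiv 0 F, MvPolynomial.pderiv 1 F,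
          MvPolynomial.pderiv 2 F}) t : ℕ∞))
    Filter.atTop

section Aux

open MvPolynomial Submodule Module

lemma auxDegreeAdd {σ : Type*} (a b : σ →₀ ℕ) :
    (a + b).degree = a.degree + b.degree := by
  simp only [Finsupp.degree_eq_weight_one, map_add]

lemma auxDegreeSingle {σ : Type*} [DecidableEq σ] (i : σ) :
    (Finsupp.single i 1).degree = 1 := by
  exact Finsupp.degree_single i 1

lemma auxDegreeOfMem {σ R : Type*} [CommSemiring R] {p : MvPolynomial σ R} {s : ℕ}
    (hp : p.IsHomogeneous s) {m : σ →₀ ℕ} (hm : m ∈ p.support) : m.degree = s := by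
  rw [Finsupp.degree_eq_weight_one]
  exact hp (MvPolynomial.mem_support_iff.mp hm)

lemma auxPderivHomog {σ R : Type*} [CommSemiring R] {φ : MvPolynomial σ R} {n : ℕ}
    (h : φ.IsHomogeneous n) (i : σ) : (MvPolynomial.pderiv i φ).IsHomogeneous (n - 1) := by
  classical
  rw [← mem_homogeneousSubmodule]
  have hφ : MvPolynomial.pderiv i φ =
      ∑ m ∈ φ.support, monomial (m - Finsupp.single i 1) (coeff m φ * (m i : R)) := by
    conv_lhs => rw [φ.as_sum]
    rw [map_sum]
    simp only [pderiv_monomial]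
  rw [hφ]
  refine Submodule.sum_mem _ fun m hm => ?_
  by_cases h0 : m i = 0
  · rw [h0]
    simp
  · rw [mem_homogeneousSubmodule]
    refine isHomogeneous_monomial _ ?_
    have h1 : (m - Finsupp.single i 1) + Finsupp.single i 1 = m :=
      tsub_add_cancel_of_le (by
        rwa [Finsupp.single_le_iff, Nat.one_le_iff_ne_zero])
    have h2 := congrArg Finsupp.degree h1
    rw [auxDegreeAdd, auxDegreeSingle] at h2
    have h3 : m.degree = n := auxDegreeOfMem h hm
    omega

lemma auxHCmul {σ R : Type*} [CommSemiring R] {g : MvPolynomial σ R} {n : ℕ}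
    (hg : g.IsHomogeneous n) (r : MvPolynomial σ R) (t : ℕ) :
    homogeneousComponent t (r * g) =
      if n ≤ t then homogeneousComponent (t - n) r * g else 0 := by
  conv_lhs => rw [← sum_homogeneousComponent r, Finset.sum_mul, map_sum]
  rw [Finset.sum_congr rfl fun i _ =>
    homogeneousComponent_of_mem ((mem_homogeneousSubmodule _ _).mpr
      ((homogeneousComponent_isHomogeneous i r).mul hg))]
  by_cases hn : n ≤ t
  · rw [if_pos hn]
    rw [Finset.sum_congr rfl fun i (_ : i ∈ Finset.range (r.totalDegree + 1)) =>
      if_congr (show (t = i + n) ↔ (i = t - n) by omega) rfl rfl]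
    rw [Finset.sum_ite_eq' (Finset.range (r.totalDegree + 1)) (t - n)
      (fun i => homogeneousComponent i r * g)]
    by_cases hR : t - n ∈ Finset.range (r.totalDegree + 1)
    · rw [if_pos hR]
    · rw [if_neg hR, homogeneousComponent_eq_zero _ r
        (by simp only [Finset.mem_range] at hR; omega), zero_mul]
  · rw [if_neg hn]
    exact Finset.sum_eq_zero fun i _ => if_neg (by omega)

lemma auxMulMemSpan {K : Type} [Field K] {σ : Type*} {p : MvPolynomial σ K} {s : ℕ}
    (hp : p.IsHomogeneous s) (g : MvPolynomial σ K) :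
    p * g ∈ span K ((fun m : σ →₀ ℕ => monomial m (1 : K) * g) '' {m | m.degree = s}) := by
  have hps : p * g = ∑ m ∈ p.support, monomial m (coeff m p) * g := by
    rw [← Finset.sum_mul, ← p.as_sum]
  rw [hps]
  refine Submodule.sum_mem _ fun m hm => ?_
  have h1 : monomial m (coeff m p) * g = coeff m p • (monomial m (1 : K) * g) := by
    rw [← smul_mul_assoc, smul_monomial, smul_eq_mul, mul_one]
  rw [h1]
  exact Submodule.smul_mem _ _ (subset_span ⟨m, auxDegreeOfMem hp hm, rfl⟩)

/-- The degree-`t` multiples of the partial derivatives. -/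
def genSet (K : Type) [Field K] (F : MvPolynomial (Fin 3) K) (e t : ℕ) :
    Set (MvPolynomial (Fin 3) K) :=
  ⋃ i : Fin 3, (fun m : Fin 3 →₀ ℕ =>
    monomial m (1 : K) * MvPolynomial.pderiv i F) '' {m | m.degree + e = t}

lemma auxInterEq {K : Type} [Field K] {F : MvPolynomial (Fin 3) K} {e : ℕ}
    (hFe : ∀ i, (MvPolynomial.pderiv i F).IsHomogeneous e) (t : ℕ) :
    homogeneousSubmodule (Fin 3) K t ⊓
        restrictScalars K (Ideal.span {MvPolynomial.pderiv 0 F, MvPolynomial.pderiv 1 F,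
          MvPolynomial.pderiv 2 F}) =
      span K (genSet K F e t) := by
  have hrange : ({MvPolynomial.pderiv 0 F, MvPolynomial.pderiv 1 F, MvPolynomial.pderiv 2 F} :
      Set (MvPolynomial (Fin 3) K)) = Set.range (fun i : Fin 3 => MvPolynomial.pderiv i F) := by
    ext x
    simp only [Set.mem_insert_iff, Set.mem_singleton_iff, Set.mem_range]
    constructor
    · rintro (rfl | rfl | rfl)
      exacts [⟨0, rfl⟩, ⟨1, rfl⟩, ⟨2, rfl⟩]
    · rintro ⟨i, rfl⟩
      fin_cases i
      · exact Or.inl rfl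
      · exact Or.inr (Or.inl rfl)
      · exact Or.inr (Or.inr rfl)
  apply le_antisymm
  · rintro x hx
    obtain ⟨hxV, hxJ⟩ := Submodule.mem_inf.mp hx
    have hxJ' : x ∈ Ideal.span (Set.range fun i : Fin 3 => MvPolynomial.pderiv i F) := by
      rw [← hrange]; exact hxJ
    rw [Ideal.mem_span_range_iff_exists_fun] at hxJ'
    obtain ⟨c, hc⟩ := hxJ'
    have hx' : x = ∑ i : Fin 3, homogeneousComponent t (c i * MvPolynomial.pderiv i F) := by
      have h0 : homogeneousComponent t x = x := by
        rw [homogeneousComponent_of_mem hxV, if_pos rfl]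
      rw [← h0]
      conv_lhs => rw [← hc]
      rw [map_sum]
    rw [hx']
    refine Submodule.sum_mem _ fun i _ => ?_
    rw [auxHCmul (hFe i)]
    by_cases he : e ≤ t
    · rw [if_pos he]
      refine Submodule.span_mono ?_
        (auxMulMemSpan (homogeneousComponent_isHomogeneous (t - e) (c i))
          (MvPolynomial.pderiv i F))
      rintro y ⟨m, hm, rfl⟩
      refine Set.mem_iUnion.mpr ⟨i, ⟨m, ?_, rfl⟩⟩
      have hm' : m.degree = t - e := hm
      simp only [Set.mem_setOf_eq]
      omega
    · rw [if_neg he]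
      exact zero_mem _
  · rw [span_le]
    rintro y hy
    obtain ⟨i, ⟨m, hm, rfl⟩⟩ := Set.mem_iUnion.mp hy
    have hm' : m.degree + e = t := hm
    refine Submodule.mem_inf.mpr ⟨?_, ?_⟩
    · rw [mem_homogeneousSubmodule]
      have := (isHomogeneous_monomial (1 : K) (rfl : m.degree = m.degree)).mul (hFe i)
      rwa [hm'] at this
    · show _ ∈ Ideal.span _
      refine Ideal.mul_mem_left _ _ (Ideal.subset_span ?_)
      fin_cases i
      · exact Or.inl rfl
      · exact Or.inr (Or.inl rfl)
      · exact Or.inr (Or.inr rfl)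

lemma auxFiniteD (t : ℕ) : {m : Fin 3 →₀ ℕ | m.degree = t}.Finite :=
  (Finsupp.finite_of_degree_le t).subset fun _ hm => le_of_eq hm

lemma auxVfinrank (K : Type) [Field K] (t : ℕ) :
    Module.finrank K (homogeneousSubmodule (Fin 3) K t) =
      Nat.card {m : Fin 3 →₀ ℕ | m.degree = t} := by
  haveI : Fintype ({m : Fin 3 →₀ ℕ | m.degree = t}) := (auxFiniteD t).fintype
  have e1 : (homogeneousSubmodule (Fin 3) K t) ≃ₗ[K]
      ({m : Fin 3 →₀ ℕ | m.degree = t} →₀ K) :=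
    (LinearEquiv.ofEq _ _ (homogeneousSubmodule_eq_finsupp_supported (Fin 3) K t)).trans
      (AddMonoidAlgebra.supportedEquivFinsupp _)
  have e2 := e1.trans (Finsupp.linearEquivFunOnFinite K K _)
  rw [e2.finrank_eq, Module.finrank_fintype_fun_eq_card, Nat.card_eq_fintype_card]

lemma auxVfd (K : Type) [Field K] (t : ℕ) :
    FiniteDimensional K (homogeneousSubmodule (Fin 3) K t) := by
  haveI : Fintype ({m : Fin 3 →₀ ℕ | m.degree = t}) := (auxFiniteD t).fintype
  have e1 : (homogeneousSubmodule (Fin 3) K t) ≃ₗ[K]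
      ({m : Fin 3 →₀ ℕ | m.degree = t} →₀ K) :=
    (LinearEquiv.ofEq _ _ (homogeneousSubmodule_eq_finsupp_supported (Fin 3) K t)).trans
      (AddMonoidAlgebra.supportedEquivFinsupp _)
  have e2 := e1.trans (Finsupp.linearEquivFunOnFinite K K _)
  exact e2.symm.finiteDimensional

lemma auxHilbert (K : Type) [Field K] (J : Ideal (MvPolynomial (Fin 3) K)) (t : ℕ) :
    hilbertFn K J t =
      Module.finrank K (homogeneousSubmodule (Fin 3) K t) -
        Module.finrank K
          ↥(homogeneousSubmodule (Fin 3) K t ⊓ restrictScalars K J) := by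
  haveI := auxVfd K t
  set V := homogeneousSubmodule (Fin 3) K t with hV
  set π := (Ideal.Quotient.mkₐ K J).toLinearMap with hπ
  have hker : LinearMap.ker π = Submodule.restrictScalars K J := by
    ext x
    simp only [LinearMap.mem_ker, hπ, AlgHom.toLinearMap_apply, Ideal.Quotient.mkₐ_eq_mk,
      Submodule.restrictScalars_mem]
    exact Ideal.Quotient.eq_zero_iff_mem
  have hrn := LinearMap.finrank_range_add_finrank_ker (π.domRestrict V)
  rw [LinearMap.range_domRestrict] at hrn
  have hkd : LinearMap.ker (π.domRestrict V) =
      comap V.subtype (V ⊓ restrictScalars K J) := by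
    rw [LinearMap.ker_domRestrict, hker, Submodule.comap_inf, Submodule.comap_subtype_self,
      top_inf_eq]
  have h5 : Module.finrank K (LinearMap.ker (π.domRestrict V)) =
      Module.finrank K ↥(V ⊓ restrictScalars K J) := by
    rw [hkd]
    exact (Submodule.comapSubtypeEquivOfLe inf_le_left).finrank_eq
  rw [h5] at hrn
  show Module.finrank K (V.map π) = _
  omega

lemma auxImage {K : Type} [Field K] (f : ℤ →+* K) (F : MvPolynomial (Fin 3) ℤ) (e t : ℕ) :
    MvPolynomial.map f '' (⋃ i : Fin 3, (fun m : Fin 3 →₀ ℕ =>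
        monomial m (1 : ℤ) * MvPolynomial.pderiv i F) '' {m | m.degree + e = t}) =
      genSet K (F.map f) e t := by
  rw [Set.image_iUnion]
  refine Set.iUnion_congr fun i => ?_
  rw [← Set.image_comp]
  refine Set.image_congr fun m _ => ?_
  simp [Function.comp, map_monomial, pderiv_map]

lemma auxRankLe (q : ℕ) [Fact q.Prime] (S : Set (MvPolynomial (Fin 3) ℤ)) (hS : S.Finite) :
    Module.finrank (ZMod q)
        (span (ZMod q) (MvPolynomial.map (Int.castRingHom (ZMod q)) '' S)) ≤
      Module.finrank ℚ (span ℚ (MvPolynomial.map (Int.castRingHom ℚ) '' S)) := by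
  classical
  set fq := MvPolynomial.map (Int.castRingHom (ZMod q)) with hfq
  set fQ := MvPolynomial.map (Int.castRingHom ℚ) with hfQ
  obtain ⟨b, hbsub, hbspan, hbli⟩ := exists_linearIndependent (ZMod q) (fq '' S)
  have hbfin : b.Finite := (hS.image fq).subset hbsub
  haveI : Fintype b := hbfin.fintype
  have hlift : ∀ y : b, ∃ x, x ∈ S ∧ fq x = (y : MvPolynomial (Fin 3) (ZMod q)) := by
    intro y
    obtain ⟨x, hx, hfx⟩ := hbsub y.2
    exact ⟨x, hx, hfx⟩
  choose v hvS hv using hlift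
  have hvalli : LinearIndependent (ZMod q) (fun y : b => fq (v y)) := by
    have hfun : (fun y : b => fq (v y)) = Subtype.val := funext fun y => hv y
    rw [hfun]
    exact hbli
  have hZli : LinearIndependent ℤ v := by
    rw [linearIndependent_iff']
    intro s g hrel i hi
    by_contra hgi
    set G := s.gcd g with hG
    have hGne : G ≠ 0 := fun h => hgi (Finset.gcd_eq_zero_iff.mp h i hi)
    have hrel2 : ∑ j ∈ s, (g j / G) • v j = 0 := by
      have h1 : G • (∑ j ∈ s, (g j / G) • v j) = 0 := by
        calc G • ∑ j ∈ s, (g j / G) • v j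
            = ∑ j ∈ s, (G * (g j / G)) • v j := by
              rw [Finset.smul_sum]; simp [smul_smul, mul_assoc]
          _ = ∑ j ∈ s, g j • v j :=
              Finset.sum_congr rfl fun j hj => by
                rw [Int.mul_ediv_cancel' (Finset.gcd_dvd hj)]
          _ = 0 := hrel
      exact (smul_eq_zero.mp h1).resolve_left hGne
    have hgcd1 : s.gcd (fun j => g j / G) = 1 := Finset.gcd_div_eq_one hi hgi
    have hrelq : ∑ j ∈ s, (((g j / G : ℤ) : ZMod q)) • (fq (v j)) = 0 := by
      have h2 := congrArg fq hrel2
      simp only [map_sum, map_zsmul, map_zero] at h2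
      simpa [Int.cast_smul_eq_zsmul] using h2
    rw [linearIndependent_iff'] at hvalli
    have hq0 := hvalli s (fun j => ((g j / G : ℤ) : ZMod q)) hrelq
    have hdvd : ∀ j ∈ s, (q : ℤ) ∣ (g j / G) := fun j hj =>
      (ZMod.intCast_zmod_eq_zero_iff_dvd _ q).mp (hq0 j hj)
    have hdvd1 : (q : ℤ) ∣ 1 := hgcd1 ▸ Finset.dvd_gcd hdvd
    have hle1 : (q : ℤ) ≤ 1 := Int.le_of_dvd one_pos hdvd1
    have hq2 : 1 < q := (Fact.out : q.Prime).one_lt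
    have : (1 : ℤ) < (q : ℤ) := by exact_mod_cast hq2
    omega
  have hQli : LinearIndependent ℚ (fun y : b => fQ (v y)) := by
    rw [← LinearIndependent.iff_fractionRing ℤ ℚ]
    have hker : LinearMap.ker (fQ.toAddMonoidHom.toIntLinearMap) = ⊥ :=
      LinearMap.ker_eq_bot.mpr (MvPolynomial.map_injective _ Int.cast_injective)
    exact hZli.map' fQ.toAddMonoidHom.toIntLinearMap hker
  have hle2 : span ℚ (Set.range fun y : b => fQ (v y)) ≤ span ℚ (fQ '' S) :=
    span_le.mpr (by rintro z ⟨y, rfl⟩; exact subset_span ⟨v y, hvS y, rfl⟩)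
  haveI : FiniteDimensional ℚ (span ℚ (fQ '' S)) :=
    FiniteDimensional.span_of_finite ℚ (hS.image _)
  calc Module.finrank (ZMod q) (span (ZMod q) (fq '' S))
      = Module.finrank (ZMod q) (span (ZMod q) b) := by rw [hbspan]
    _ = b.toFinset.card := finrank_span_set_eq_card hbli
    _ = Fintype.card b := Set.toFinset_card b
    _ = Module.finrank ℚ (span ℚ (Set.range fun y : b => fQ (v y))) :=
        (finrank_span_eq_card hQli).symm
    _ ≤ Module.finrank ℚ (span ℚ (fQ '' S)) := Submodule.finrank_mono hle2

end Aux

/-- **Semicontinuity of the total Tjurina number under reduction mod `q`.** -/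
theorem totalTjurina_le_totalTjurina_mod_q
    (F : MvPolynomial (Fin 3) ℤ) (d : ℕ) (hd : 0 < d)
    (hhom : (F.map (Int.castRingHom ℚ)).IsHomogeneous d)
    (hsq : Squarefree (F.map (Int.castRingHom ℚ)))
    (q : ℕ) [Fact q.Prime]
    (hq : F.map (Int.castRingHom (ZMod q)) ≠ 0) :
    totalTjurina ℚ (F.map (Int.castRingHom ℚ)) ≤
      totalTjurina (ZMod q) (F.map (Int.castRingHom (ZMod q))) := by
  classical
  open MvPolynomial Submodule in
  have hFZ : F.IsHomogeneous d := by
    intro m hm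
    refine hhom ?_
    have h1 : ((MvPolynomial.coeff m F : ℤ) : ℚ) ≠ 0 := Int.cast_ne_zero.mpr hm
    simpa [MvPolynomial.coeff_map] using h1
  have hqhom : (F.map (Int.castRingHom (ZMod q))).IsHomogeneous d :=
    hFZ.map _
  have hQd : ∀ i : Fin 3,
      (MvPolynomial.pderiv i (F.map (Int.castRingHom ℚ))).IsHomogeneous (d - 1) :=
    fun i => auxPderivHomog hhom i
  have hqd : ∀ i : Fin 3,
      (MvPolynomial.pderiv i (F.map (Int.castRingHom (ZMod q)))).IsHomogeneous (d - 1) :=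
    fun i => auxPderivHomog hqhom i
  have hSZfin : ∀ t : ℕ, (⋃ i : Fin 3, (fun m : Fin 3 →₀ ℕ =>
      MvPolynomial.monomial m (1 : ℤ) * MvPolynomial.pderiv i F) ''
        {m | m.degree + (d - 1) = t}).Finite := by
    intro t
    refine Set.finite_iUnion fun i => Set.Finite.image _ ?_
    refine (auxFiniteD (t - (d - 1))).subset fun m hm => ?_
    simp only [Set.mem_setOf_eq] at hm ⊢
    omega
  have key : ∀ t : ℕ,
      hilbertFn ℚ (Ideal.span {MvPolynomial.pderiv 0 (F.map (Int.castRingHom ℚ)),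
        MvPolynomial.pderiv 1 (F.map (Int.castRingHom ℚ)),
        MvPolynomial.pderiv 2 (F.map (Int.castRingHom ℚ))}) t ≤
      hilbertFn (ZMod q) (Ideal.span {MvPolynomial.pderiv 0 (F.map (Int.castRingHom (ZMod q))),
        MvPolynomial.pderiv 1 (F.map (Int.castRingHom (ZMod q))),
        MvPolynomial.pderiv 2 (F.map (Int.castRingHom (ZMod q)))}) t := by
    intro t
    rw [auxHilbert, auxHilbert, auxInterEq hQd t, auxInterEq hqd t,
      ← auxImage (Int.castRingHom ℚ) F (d - 1) t,
      ← auxImage (Int.castRingHom (ZMod q)) F (d - 1) t,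
      auxVfinrank, auxVfinrank]
    exact Nat.sub_le_sub_left (auxRankLe q _ (hSZfin t)) _
  refine Filter.limsup_le_limsup (Filter.Eventually.of_forall fun t => ?_)
  dsimp only
  exact_mod_cast key t
end

section
/- Let g ∈ K[[X]][Y] be monic of degree m in Y with Puiseux expansions γ_1, …, γ_m, and fix 1 ≤ d ≤ m−1. For a subset A ⊆ {1,…,m} of cardinality d, define Int(A) = min over i ∉ A of Σ_{j ∈ A} v(γ_i − γ_j). Choose Ã of cardinality d maximizing Int, and set p̃ = Π_{j∈Ã}(Y − γ_j). Then v_g(p̃) = Int(Ã), and this is the maximum of v_g(q) over all q ∈ L{{X}}[Y] that are monic of degree d in Y. -/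
open Polynomial

/-- The map from `K[[X]]` into Hahn series over `L` with rational exponents
(a universe for Puiseux series). -/
noncomputable def toHahn (K L : Type) [Field K] [Field L] [Algebra K L] :
    PowerSeries K →+* HahnSeries ℚ L :=
  (HahnSeries.ofPowerSeries ℚ L).comp (PowerSeries.map (algebraMap K L))

/-- A Hahn series is a Puiseux series if its exponents have a common denominator. -/
def IsPuiseux {L : Type} [Zero L] (γ : HahnSeries ℚ L) : Prop :=
  ∃ m : ℕ, m ≠ 0 ∧ ∀ q ∈ γ.support, ∃ k : ℤ, q = (k : ℚ) / m

/-- The valuation `v_g(q) = min_i v_{γ_i}(q)` of a polynomial `q` at the family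
`γ` of Puiseux expansions of `g`. -/
noncomputable def vg {L : Type} [Field L] {m : ℕ} (γ : Fin m → HahnSeries ℚ L)
    (q : Polynomial (HahnSeries ℚ L)) : WithTop ℚ :=
  Finset.univ.inf fun i => (q.eval (γ i)).orderTop

/-- `Int(A) = min_{i ∉ A} ∑_{j ∈ A} v(γ_i - γ_j)`. -/
noncomputable def intNum {L : Type} [Field L] {m : ℕ} (γ : Fin m → HahnSeries ℚ L)
    (A : Finset (Fin m)) : WithTop ℚ :=
  Aᶜ.inf fun i => ∑ j ∈ A, (γ i - γ j).orderTop

namespace MaxValAux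


variable {L : Type} [Field L]

lemma orderTop_mul' (x y : HahnSeries ℚ L) :
    (x * y).orderTop = x.orderTop + y.orderTop := by
  have h := (HahnSeries.addVal ℚ L).map_mul x y
  simpa only [HahnSeries.addVal_apply] using h

lemma orderTop_prod {ι : Type*} (s : Finset ι) (f : ι → HahnSeries ℚ L) :
    (∏ i ∈ s, f i).orderTop = ∑ i ∈ s, (f i).orderTop := by
  classical
  induction s using Finset.induction_on with
  | empty => simp [HahnSeries.orderTop_one]
  | @insert a s ha ih =>
      rw [Finset.prod_insert ha, Finset.sum_insert ha, orderTop_mul', ih]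

lemma inf_le_orderTop_sum {ι : Type*} (s : Finset ι) (f : ι → HahnSeries ℚ L) :
    (s.inf fun i => (f i).orderTop) ≤ (∑ i ∈ s, f i).orderTop := by
  classical
  induction s using Finset.induction_on with
  | empty => simp
  | @insert a s ha ih =>
      rw [Finset.sum_insert ha, Finset.inf_insert]
      exact le_trans (min_le_min le_rfl ih) HahnSeries.min_orderTop_le_orderTop_add

lemma exists_injOn_subset {α β : Type*} [DecidableEq α] [DecidableEq β]
    (f : α → β) (s : Finset α) :
    ∃ t, t ⊆ s ∧ t.image f = s.image f ∧ Set.InjOn f ↑t := by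
  induction s using Finset.induction_on with
  | empty => exact ⟨∅, by simp, by simp, by simp⟩
  | @insert a s ha ih =>
      obtain ⟨t, hts, him, hinj⟩ := ih
      by_cases h : f a ∈ s.image f
      · refine ⟨t, hts.trans (Finset.subset_insert a s), ?_, hinj⟩
        rw [Finset.image_insert, him, Finset.insert_eq_self.mpr h]
      · refine ⟨insert a t, Finset.insert_subset_insert a hts, ?_, ?_⟩
        · rw [Finset.image_insert, Finset.image_insert, him]
        · rw [Finset.coe_insert]
          refine (Set.injOn_insert (fun hat => ha (hts (Finset.mem_coe.mp hat)))).mpr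
            ⟨hinj, ?_⟩
          rw [← Finset.coe_image, him]
          exact fun hmem => h (Finset.mem_coe.mp hmem)

lemma T_insert {ι : Type*} [DecidableEq ι] (w : ι → ι → WithTop ℚ)
    (hsym : ∀ a b, w a b = w b a) {B : Finset ι} {i : ι} (hi : i ∉ B) :
    ∑ k ∈ insert i B, ∑ l ∈ (insert i B).erase k, w k l
      = (∑ k ∈ B, ∑ l ∈ B.erase k, w k l) + ((∑ j ∈ B, w i j) + (∑ j ∈ B, w i j)) := by
  rw [Finset.sum_insert hi, Finset.erase_insert hi]
  have h1 : ∀ k ∈ B, ∑ l ∈ (insert i B).erase k, w k l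
      = w k i + ∑ l ∈ B.erase k, w k l := by
    intro k hk
    have hik : i ≠ k := fun h => hi (h ▸ hk)
    rw [Finset.erase_insert_of_ne hik,
      Finset.sum_insert (fun h => hi (Finset.mem_of_mem_erase h))]
  rw [Finset.sum_congr rfl h1, Finset.sum_add_distrib]
  have h2 : ∑ k ∈ B, w k i = ∑ j ∈ B, w i j :=
    Finset.sum_congr rfl (fun k _ => hsym k i)
  rw [h2]; abel

lemma divided_diff {ι : Type*} [DecidableEq ι] (S : Finset ι) (v : ι → HahnSeries ℚ L)
    (hinj : Set.InjOn v ↑S) (q : Polynomial (HahnSeries ℚ L)) (hq : q.Monic)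
    (hqd : q.natDegree + 1 = S.card) :
    (1 : HahnSeries ℚ L)
      = ∑ k ∈ S, q.eval (v k) * (∏ l ∈ S.erase k, (v k - v l))⁻¹ := by
  have hdeg : q.degree < S.card := by
    rw [degree_eq_natDegree hq.ne_zero, ← hqd]
    exact_mod_cast Nat.lt_succ_self _
  have h := Lagrange.eq_interpolate hinj hdeg
  have hc := congrArg (fun p => Polynomial.coeff p q.natDegree) h
  simp only [Lagrange.interpolate_apply, Polynomial.finset_sum_coeff,
    Polynomial.coeff_C_mul] at hc
  rw [hq.coeff_natDegree] at hc
  rw [hc]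
  refine Finset.sum_congr rfl fun k hk => ?_
  congr 1
  have hbd1 : ∀ x y : HahnSeries ℚ L, (Lagrange.basisDivisor x y).coeff 1 = (x - y)⁻¹ := by
    intro x y
    unfold Lagrange.basisDivisor
    rw [Polynomial.coeff_C_mul, Polynomial.coeff_sub, Polynomial.coeff_X_one,
      Polynomial.coeff_C]
    norm_num
  have hbdle : ∀ l ∈ S.erase k, (Lagrange.basisDivisor (v k) (v l)).natDegree ≤ 1 := by
    intro l _
    unfold Lagrange.basisDivisor
    refine Polynomial.natDegree_mul_le.trans ?_
    simp [Polynomial.natDegree_X_sub_C]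
  have hcard : (S.erase k).card = q.natDegree := by
    rw [Finset.card_erase_of_mem hk, ← hqd]; simp
  have hcp := Polynomial.coeff_prod_of_natDegree_le (s := S.erase k)
    (fun l => Lagrange.basisDivisor (v k) (v l)) 1 hbdle
  unfold Lagrange.basis
  rw [← hcard, ← mul_one (S.erase k).card, hcp]
  rw [Finset.prod_congr rfl (fun l _ => hbd1 (v k) (v l))]
  rw [← Finset.prod_inv_distrib]

end MaxValAux

open MaxValAux in
theorem maximal_valuation_monic_degree_d
    (K L : Type) [Field K] [Field L] [Algebra K L] [CharZero K] [IsAlgClosed L]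
    (m d : ℕ) (hd : 1 ≤ d) (hdm : d < m)
    (g : Polynomial (PowerSeries K)) (hmonic : g.Monic) (hdeg : g.natDegree = m)
    (γ : Fin m → HahnSeries ℚ L)
    (hfact : g.map (toHahn K L) = ∏ i, (X - C (γ i)))
    (Atil : Finset (Fin m)) (hcard : Atil.card = d)
    (hmax : ∀ A : Finset (Fin m), A.card = d → intNum γ A ≤ intNum γ Atil) :
    vg γ (∏ j ∈ Atil, (X - C (γ j))) = intNum γ Atil ∧
      ∀ q : Polynomial (HahnSeries ℚ L), q.Monic → q.natDegree = d →
        (∀ i, IsPuiseux (q.coeff i)) → vg γ q ≤ intNum γ Atil := by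
  classical
  set w : Fin m → Fin m → WithTop ℚ := fun i j => (γ i - γ j).orderTop with hw
  have hsym : ∀ a b, w a b = w b a := by
    intro a b
    show (γ a - γ b).orderTop = (γ b - γ a).orderTop
    rw [← HahnSeries.orderTop_neg, neg_sub]
  constructor
  · -- Part 1
    have heval : ∀ i : Fin m,
        ((∏ j ∈ Atil, (X - C (γ j))).eval (γ i)).orderTop = ∑ j ∈ Atil, w i j := by
      intro i
      rw [Polynomial.eval_prod]
      have : ∀ j ∈ Atil, (X - C (γ j)).eval (γ i) = γ i - γ j := by
        intro j _; simp
      rw [Finset.prod_congr rfl this, orderTop_prod]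
    have h1 : vg γ (∏ j ∈ Atil, (X - C (γ j))) = Finset.univ.inf fun i => ∑ j ∈ Atil, w i j := by
      unfold vg
      exact Finset.inf_congr rfl fun i _ => heval i
    rw [h1, ← Finset.union_compl Atil, Finset.inf_union]
    have htop : (Atil.inf fun i => ∑ j ∈ Atil, w i j) = ⊤ := by
      refine (Finset.inf_eq_top_iff _ _).mpr fun i hi => WithTop.sum_eq_top.mpr ⟨i, hi, ?_⟩
      show (γ i - γ i).orderTop = ⊤
      rw [sub_self]; exact HahnSeries.orderTop_zero
    rw [htop, top_inf_eq]
    rfl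
  · -- Part 2
    intro q hqm hqd _
    obtain ⟨t, hts, htim, htinj⟩ := exists_injOn_subset γ Finset.univ
    by_cases htc : d + 1 ≤ t.card
    · obtain ⟨t0, ht0, ht0c⟩ := Finset.exists_subset_card_eq (s := t) (n := d + 1) htc
      set 𝒮 := (Finset.univ.powersetCard (d + 1)).filter (fun S : Finset (Fin m) => Set.InjOn γ (↑S : Set (Fin m))) with h𝒮
      have ht0𝒮 : t0 ∈ 𝒮 := by
        rw [h𝒮, Finset.mem_filter, Finset.mem_powersetCard]
        exact ⟨⟨Finset.subset_univ _, ht0c⟩, htinj.mono (by exact_mod_cast ht0)⟩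
      obtain ⟨S, hS, hSmin⟩ := Finset.exists_min_image 𝒮
        (fun S => ∑ k ∈ S, ∑ l ∈ S.erase k, w k l) ⟨t0, ht0𝒮⟩
      rw [h𝒮, Finset.mem_filter, Finset.mem_powersetCard] at hS
      obtain ⟨⟨-, hScard⟩, hSinj⟩ := hS
      have hSne : S.Nonempty := Finset.card_pos.mp (by omega)
      have hwfin : ∀ k ∈ S, ∀ l ∈ S.erase k, w k l ≠ ⊤ := by
        intro k hk l hl
        have hlk : l ≠ k := (Finset.mem_erase.mp hl).1
        have hlS : l ∈ S := (Finset.mem_erase.mp hl).2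
        have hne : γ k - γ l ≠ 0 := by
          rw [sub_ne_zero]
          exact fun h => hlk (hSinj (Finset.mem_coe.mpr hlS) (Finset.mem_coe.mpr hk) h.symm)
        show (γ k - γ l).orderTop ≠ ⊤
        exact fun h => hne (HahnSeries.orderTop_eq_top.mp h)
      obtain ⟨k0, hk0S, hk0max⟩ := Finset.exists_max_image S
        (fun k => ∑ l ∈ S.erase k, w k l) hSne
      have hk0A : k0 ∉ S.erase k0 := Finset.notMem_erase k0 S
      have hAcard : (S.erase k0).card = d := by
        rw [Finset.card_erase_of_mem hk0S, hScard]; omega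
      have hTAfin : (∑ k ∈ S.erase k0, ∑ l ∈ (S.erase k0).erase k, w k l) ≠ ⊤ := by
        intro h
        obtain ⟨k, hk, hkt⟩ := WithTop.sum_eq_top.mp h
        obtain ⟨l, hl, hlt⟩ := WithTop.sum_eq_top.mp hkt
        have hkS : k ∈ S := Finset.mem_of_mem_erase hk
        have hlS : l ∈ S.erase k := by
          rw [Finset.mem_erase]
          exact ⟨(Finset.mem_erase.mp hl).1,
            Finset.mem_of_mem_erase (Finset.mem_of_mem_erase hl)⟩
        exact hwfin k hkS l hlS hlt
      have hFfin : (∑ l ∈ S.erase k0, w k0 l) ≠ ⊤ := by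
        intro h
        obtain ⟨l, hl, hlt⟩ := WithTop.sum_eq_top.mp h
        exact hwfin k0 hk0S l hl hlt
      -- F ≤ intNum γ (S.erase k0)
      have hFle : (∑ l ∈ S.erase k0, w k0 l) ≤ intNum γ (S.erase k0) := by
        unfold intNum
        refine Finset.le_inf fun i hi => ?_
        rw [Finset.mem_compl] at hi
        by_cases hik : i = k0
        · subst hik; exact le_of_eq rfl
        · have hiS : i ∉ S := fun hiS' => hi (Finset.mem_erase.mpr ⟨hik, hiS'⟩)
          by_cases hgam : ∃ j ∈ S.erase k0, γ i = γ j
          · obtain ⟨j, hj, hje⟩ := hgam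
            have ht : ∑ j ∈ S.erase k0, (γ i - γ j).orderTop = ⊤ := by
              refine WithTop.sum_eq_top.mpr ⟨j, hj, ?_⟩
              rw [hje, sub_self]; exact HahnSeries.orderTop_zero
            rw [ht]; exact le_top
          · push_neg at hgam
            have hiA : i ∉ S.erase k0 := hi
            have hS'card : (insert i (S.erase k0)).card = d + 1 := by
              rw [Finset.card_insert_of_notMem hiA, hAcard]
            have hS'inj : Set.InjOn γ ↑(insert i (S.erase k0)) := by
              rw [Finset.coe_insert]
              refine (Set.injOn_insert (fun h => hiA (Finset.mem_coe.mp h))).mpr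
                ⟨hSinj.mono (by exact_mod_cast Finset.erase_subset k0 S), ?_⟩
              rintro ⟨j, hj, hje⟩
              exact hgam j (Finset.mem_coe.mp hj) hje.symm
            have hS'𝒮 : insert i (S.erase k0) ∈ 𝒮 := by
              rw [h𝒮, Finset.mem_filter, Finset.mem_powersetCard]
              exact ⟨⟨Finset.subset_univ _, hS'card⟩, hS'inj⟩
            have hmin := hSmin _ hS'𝒮
            have hTS : ∑ k ∈ S, ∑ l ∈ S.erase k, w k l
                = (∑ k ∈ S.erase k0, ∑ l ∈ (S.erase k0).erase k, w k l)
                  + ((∑ j ∈ S.erase k0, w k0 j) + (∑ j ∈ S.erase k0, w k0 j)) := by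
              conv_lhs => rw [← Finset.insert_erase hk0S]
              rw [T_insert w hsym hk0A]
            have hTS' : ∑ k ∈ insert i (S.erase k0), ∑ l ∈ (insert i (S.erase k0)).erase k, w k l
                = (∑ k ∈ S.erase k0, ∑ l ∈ (S.erase k0).erase k, w k l)
                  + ((∑ j ∈ S.erase k0, w i j) + (∑ j ∈ S.erase k0, w i j)) :=
              T_insert w hsym hiA
            rw [hTS, hTS'] at hmin
            rw [WithTop.add_le_add_iff_left hTAfin] at hmin
            by_cases hΦtop : (∑ j ∈ S.erase k0, w i j) = ⊤
            · rw [hΦtop]; exact le_top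
            · obtain ⟨Fq, hFq⟩ := WithTop.ne_top_iff_exists.mp hFfin
              obtain ⟨Φq, hΦq⟩ := WithTop.ne_top_iff_exists.mp hΦtop
              rw [← hFq, ← hΦq, ← WithTop.coe_add, ← WithTop.coe_add,
                WithTop.coe_le_coe] at hmin
              rw [← hFq, ← hΦq, WithTop.coe_le_coe]
              linarith
      -- divided differences
      have hdd := divided_diff S γ hSinj q hqm (by rw [hqd, hScard])
      have h0 : (S.inf fun k =>
          (q.eval (γ k) * (∏ l ∈ S.erase k, (γ k - γ l))⁻¹).orderTop) ≤ 0 := by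
        calc (S.inf fun k =>
              (q.eval (γ k) * (∏ l ∈ S.erase k, (γ k - γ l))⁻¹).orderTop)
            ≤ (∑ k ∈ S, q.eval (γ k) * (∏ l ∈ S.erase k, (γ k - γ l))⁻¹).orderTop :=
              inf_le_orderTop_sum S _
          _ = (1 : HahnSeries ℚ L).orderTop := by rw [← hdd]
          _ = 0 := HahnSeries.orderTop_one
      obtain ⟨k1, hk1S, hk1⟩ := (Finset.inf_le_iff (by simp : (0 : WithTop ℚ) < ⊤)).mp h0
      have hP : (∏ l ∈ S.erase k1, (γ k1 - γ l)) ≠ 0 := by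
        refine Finset.prod_ne_zero_iff.mpr fun l hl => ?_
        rw [sub_ne_zero]
        exact fun h => (Finset.mem_erase.mp hl).1
          (hSinj (Finset.mem_coe.mpr (Finset.mem_erase.mp hl).2)
            (Finset.mem_coe.mpr hk1S) h.symm)
      have hPord : (∏ l ∈ S.erase k1, (γ k1 - γ l)).orderTop = ∑ l ∈ S.erase k1, w k1 l :=
        orderTop_prod _ _
      have hinv : (∑ l ∈ S.erase k1, w k1 l)
          + ((∏ l ∈ S.erase k1, (γ k1 - γ l))⁻¹).orderTop = 0 := by
        rw [← hPord, ← orderTop_mul', mul_inv_cancel₀ hP, HahnSeries.orderTop_one]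
      have hbfin : ((∏ l ∈ S.erase k1, (γ k1 - γ l))⁻¹).orderTop ≠ ⊤ := by
        intro h
        rw [h, add_top] at hinv
        exact (WithTop.top_ne_zero) hinv
      rw [orderTop_mul'] at hk1
      have hqev : (q.eval (γ k1)).orderTop ≤ ∑ l ∈ S.erase k1, w k1 l := by
        have h2 := hk1.trans_eq hinv.symm
        exact (WithTop.add_le_add_iff_right hbfin).mp h2
      calc vg γ q ≤ (q.eval (γ k1)).orderTop := Finset.inf_le (Finset.mem_univ k1)
        _ ≤ ∑ l ∈ S.erase k1, w k1 l := hqev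
        _ ≤ ∑ l ∈ S.erase k0, w k0 l := hk0max k1 hk1S
        _ ≤ intNum γ (S.erase k0) := hFle
        _ ≤ intNum γ Atil := hmax _ hAcard
    · push_neg at htc
      obtain ⟨A, htA, hAu, hAcard⟩ := Finset.exists_subsuperset_card_eq (n := d)
        (Finset.subset_univ t) (by omega)
        (by rw [Finset.card_univ, Fintype.card_fin]; omega)
      have htopA : (⊤ : WithTop ℚ) ≤ intNum γ A := by
        refine Finset.le_inf fun i hi => ?_
        rw [Finset.mem_compl] at hi
        have : γ i ∈ t.image γ := by
          rw [htim]
          exact Finset.mem_image_of_mem γ (Finset.mem_univ i)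
        obtain ⟨j, hj, hje⟩ := Finset.mem_image.mp this
        refine le_of_eq (WithTop.sum_eq_top.mpr ⟨j, htA hj, ?_⟩).symm
        rw [← hje, sub_self]
        exact HahnSeries.orderTop_zero
      have h2 : intNum γ Atil = ⊤ := top_le_iff.mp (htopA.trans (hmax A hAcard))
      rw [h2]; exact le_top
end

section
/- Let f_1, …, f_r be the distinct irreducible Weierstrass polynomial factors of f in K[[X]][Y], and set h_i = Π_{j≠i} f_j. Then f_i and h_i are coprime in K((X))[Y], so there exist a_i, b_i ∈ K[[X]][Y] and c_i ∈ ℕ with a_i f_i + b_i h_i = X^{c_i}. Moreover the normalization of K[[X]][Y]/⟨f_1⋯f_r⟩ is isomorphic to the direct sum ⊕_{i=1}^r of the normalizations of K[[X]][Y]/⟨f_i⟩, via (t_1 mod f_1, …, t_r mod f_r) ↦ Σ_i b_i h_i t_i / X^{c_i} mod f_1⋯f_r. -/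
open Polynomial

set_option synthInstance.maxHeartbeats 1000000
set_option maxHeartbeats 2000000

/-- The ring `B = K[[X]][Y]/⟨g⟩`. -/
def PSQuot (K : Type) [Field K] (g : Polynomial (PowerSeries K)) : Type :=
  (Polynomial (PowerSeries K)) ⧸ Ideal.span {g}

noncomputable instance (K : Type) [Field K] (g : Polynomial (PowerSeries K)) :
    CommRing (PSQuot K g) :=
  inferInstanceAs (CommRing ((Polynomial (PowerSeries K)) ⧸ Ideal.span {g}))

noncomputable instance (K : Type) [Field K] (g : Polynomial (PowerSeries K)) :
    Algebra (PowerSeries K) (PSQuot K g) :=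
  inferInstanceAs (Algebra (PowerSeries K) ((Polynomial (PowerSeries K)) ⧸ Ideal.span {g}))

/-- The residue class map `K[[X]][Y] → B`. -/
noncomputable def psMk (K : Type) [Field K] (g : Polynomial (PowerSeries K)) :
    Polynomial (PowerSeries K) →+* PSQuot K g :=
  Ideal.Quotient.mk (Ideal.span {g})

noncomputable instance (K : Type) [Field K] (g : Polynomial (PowerSeries K)) :
    Algebra (PowerSeries K) (FractionRing (PSQuot K g)) :=
  ((algebraMap (PSQuot K g) (FractionRing (PSQuot K g))).comp
    (algebraMap (PowerSeries K) (PSQuot K g))).toAlgebra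

/-- The integral closure of `B = K[[X]][Y]/⟨g⟩` in its total ring of fractions,
viewed as a `K[[X]]`-submodule. -/
noncomputable def normalizationSubmodule (K : Type) [Field K]
    (g : Polynomial (PowerSeries K)) :
    Submodule (PowerSeries K) (FractionRing (PSQuot K g)) :=
  (Subalgebra.toSubmodule
    (integralClosure (PSQuot K g) (FractionRing (PSQuot K g)))).restrictScalars
    (PowerSeries K)

/-- The image of `x` in the total ring of fractions of `B`. -/
noncomputable def xElt (K : Type) [Field K] (g : Polynomial (PowerSeries K)) :
    FractionRing (PSQuot K g) :=
  algebraMap (PSQuot K g) (FractionRing (PSQuot K g)) (psMk K g (C PowerSeries.X))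

namespace SplitAux

variable {K : Type} [Field K] {r : ℕ} (f : Fin r → Polynomial (PowerSeries K))

lemma mk_eq_zero_iff (q P : Polynomial (PowerSeries K)) : psMk K q P = 0 ↔ q ∣ P :=
  Ideal.Quotient.eq_zero_iff_dvd q P

lemma mk_surj (q : Polynomial (PowerSeries K)) : Function.Surjective (psMk K q) :=
  Ideal.Quotient.mk_surjective

lemma mk_eq_of_dvd_sub (q P Q : Polynomial (PowerSeries K)) (h : q ∣ P - Q) :
    psMk K q P = psMk K q Q :=
  Ideal.Quotient.eq.mpr (Ideal.mem_span_singleton.mpr h)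

lemma instDom (hp : ∀ i, Prime (f i)) (i : Fin r) : IsDomain (PSQuot K (f i)) := by
  have : (Ideal.span {f i}).IsPrime :=
    (Ideal.span_singleton_prime (hp i).ne_zero).mpr (hp i)
  exact Ideal.Quotient.isDomain_iff_prime _ |>.mpr this

lemma prod_dvd (hp : ∀ i, Prime (f i)) (hnd : ∀ i j, i ≠ j → ¬ f i ∣ f j) :
    ∀ (s : Finset (Fin r)) (p : Polynomial (PowerSeries K)),
      (∀ i ∈ s, f i ∣ p) → (∏ i ∈ s, f i) ∣ p := by
  classical
  intro s
  induction s using Finset.induction_on with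
  | empty => intro p _; simp
  | @insert a s ha ih =>
    intro p hdvd
    obtain ⟨q, rfl⟩ := hdvd a (Finset.mem_insert_self a s)
    rw [Finset.prod_insert ha]
    have hq : ∀ i ∈ s, f i ∣ q := by
      intro i hi
      have hia : i ≠ a := fun h => ha (h ▸ hi)
      rcases (hp i).2.2 _ _ (hdvd i (Finset.mem_insert_of_mem hi)) with h1 | h2
      · exact absurd h1 (hnd i a hia)
      · exact h2
    exact mul_dvd_mul_left (f a) (ih q hq)

lemma dvd_g (i : Fin r) : f i ∣ ∏ j, f j :=
  Finset.dvd_prod_of_mem _ (Finset.mem_univ i)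

noncomputable def phi (i : Fin r) : PSQuot K (∏ j, f j) →+* PSQuot K (f i) :=
  Ideal.Quotient.factor (Ideal.span_singleton_le_span_singleton.mpr (dvd_g f i))

lemma phi_mk (i : Fin r) (P : Polynomial (PowerSeries K)) :
    phi f i (psMk K (∏ j, f j) P) = psMk K (f i) P :=
  Ideal.Quotient.factor_mk _ _

lemma phi_surj (i : Fin r) : Function.Surjective (phi f i) := by
  intro x
  obtain ⟨P, hP⟩ := mk_surj (f i) x
  exact ⟨psMk K _ P, by rw [phi_mk, hP]⟩

noncomputable def psi (i : Fin r) :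
    PSQuot K (∏ j, f j) →+* FractionRing (PSQuot K (f i)) :=
  (algebraMap (PSQuot K (f i)) (FractionRing (PSQuot K (f i)))).comp (phi f i)

lemma psi_mk (i : Fin r) (P : Polynomial (PowerSeries K)) :
    psi f i (psMk K (∏ j, f j) P)
      = algebraMap (PSQuot K (f i)) (FractionRing (PSQuot K (f i))) (psMk K (f i) P) := by
  rw [psi, RingHom.comp_apply, phi_mk]

noncomputable def psiPi :
    PSQuot K (∏ j, f j) →+* ((i : Fin r) → FractionRing (PSQuot K (f i))) :=
  Pi.ringHom (psi f)

lemma psiPi_apply (z : PSQuot K (∏ j, f j)) (i : Fin r) : psiPi f z i = psi f i z := rfl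

lemma nzd_iff (hp : ∀ i, Prime (f i)) (hnd : ∀ i j, i ≠ j → ¬ f i ∣ f j)
    (P : Polynomial (PowerSeries K)) :
    psMk K (∏ j, f j) P ∈ nonZeroDivisors (PSQuot K (∏ j, f j)) ↔ ∀ i, ¬ f i ∣ P := by
  classical
  constructor
  · intro hmem i hdvd
    obtain ⟨Q, rfl⟩ := hdvd
    have hgH : (∏ j, f j) ∣ (∏ j ∈ Finset.univ.erase i, f j) * (f i * Q) :=
      ⟨Q, by rw [← Finset.mul_prod_erase Finset.univ f (Finset.mem_univ i)]; ring⟩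
    have hz : psMk K (∏ j, f j) (∏ j ∈ Finset.univ.erase i, f j) * psMk K (∏ j, f j) (f i * Q)
        = 0 := by
      rw [← map_mul, mk_eq_zero_iff]; exact hgH
    have hH0 : psMk K (∏ j, f j) (∏ j ∈ Finset.univ.erase i, f j) = 0 :=
      hmem.2 _ hz
    rw [mk_eq_zero_iff] at hH0
    have hfi : f i ∣ ∏ j ∈ Finset.univ.erase i, f j := dvd_trans (dvd_g f i) hH0
    obtain ⟨j, hjmem, hjdvd⟩ := (hp i).exists_mem_finset_dvd hfi
    exact hnd i j (Ne.symm (Finset.mem_erase.mp hjmem).1) hjdvd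
  · intro hnotd
    rw [mem_nonZeroDivisors_iff_right]
    intro z hz
    obtain ⟨Z, rfl⟩ := mk_surj _ z
    rw [← map_mul, mk_eq_zero_iff] at hz
    have hZ : ∀ i ∈ Finset.univ, f i ∣ Z := by
      intro i _
      exact ((hp i).2.2 _ _ (dvd_trans (dvd_g f i) hz)).resolve_right (hnotd i)
    exact (mk_eq_zero_iff _ _).mpr (prod_dvd f hp hnd Finset.univ Z hZ)

lemma psi_units (hp : ∀ i, Prime (f i)) (hnd : ∀ i j, i ≠ j → ¬ f i ∣ f j)
    (y : nonZeroDivisors (PSQuot K (∏ j, f j))) : IsUnit (psiPi f y) := by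
  obtain ⟨P, hP⟩ := mk_surj _ (y : PSQuot K (∏ j, f j))
  have hy := y.2
  rw [← hP] at hy
  have hcomp : ∀ i, IsUnit (psiPi f (y : PSQuot K (∏ j, f j)) i) := by
    intro i
    haveI := instDom f hp i
    have h1 : psiPi f (y : PSQuot K (∏ j, f j)) i
        = algebraMap (PSQuot K (f i)) _ (psMk K (f i) P) := by
      rw [psiPi_apply, ← hP, psi_mk]
    have hne : psMk K (f i) P ≠ 0 := by
      rw [Ne, mk_eq_zero_iff]
      exact (nzd_iff f hp hnd P).mp hy i
    rw [h1]
    exact IsLocalization.map_units _ ⟨psMk K (f i) P, mem_nonZeroDivisors_iff_ne_zero.mpr hne⟩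
  choose w hw using fun i => isUnit_iff_exists_inv.mp (hcomp i)
  exact isUnit_iff_exists_inv.mpr ⟨w, funext hw⟩

noncomputable def Psi (hp : ∀ i, Prime (f i)) (hnd : ∀ i j, i ≠ j → ¬ f i ∣ f j) :
    FractionRing (PSQuot K (∏ j, f j)) →+* ((i : Fin r) → FractionRing (PSQuot K (f i))) :=
  IsLocalization.lift (psi_units f hp hnd)

lemma Psi_alg (hp : ∀ i, Prime (f i)) (hnd : ∀ i j, i ≠ j → ¬ f i ∣ f j)
    (p : PSQuot K (∏ j, f j)) :
    Psi f hp hnd (algebraMap _ (FractionRing (PSQuot K (∏ j, f j))) p) = psiPi f p :=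
  IsLocalization.lift_eq _ p


variable (hp : ∀ i, Prime (f i)) (hnd : ∀ i j, i ≠ j → ¬ f i ∣ f j)

lemma Psi_inj : Function.Injective (Psi f hp hnd) := by
  rw [injective_iff_map_eq_zero]
  intro w hw
  obtain ⟨p, q, rfl⟩ := IsLocalization.exists_mk'_eq
    (nonZeroDivisors (PSQuot K (∏ j, f j))) w
  obtain ⟨P, rfl⟩ := mk_surj _ p
  have hspec := IsLocalization.mk'_spec (FractionRing (PSQuot K (∏ j, f j)))
    (psMk K (∏ j, f j) P) q
  have h0 : psiPi f (psMk K (∏ j, f j) P) = 0 := by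
    have h1 := congrArg (Psi f hp hnd) hspec
    rw [map_mul, hw, zero_mul, Psi_alg] at h1
    exact h1.symm
  have hdvd : ∀ i ∈ Finset.univ, f i ∣ P := by
    intro i _
    haveI := instDom f hp i
    have h2 : algebraMap (PSQuot K (f i)) (FractionRing (PSQuot K (f i)))
        (psMk K (f i) P) = 0 := by
      have := congrFun h0 i
      rwa [psiPi_apply, psi_mk] at this
    have h3 : psMk K (f i) P = 0 := by
      apply IsLocalization.injective (FractionRing (PSQuot K (f i)))
        (le_refl (nonZeroDivisors (PSQuot K (f i))))
      rw [h2, map_zero]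
    rwa [mk_eq_zero_iff] at h3
  have hP0 : psMk K (∏ j, f j) P = 0 :=
    (mk_eq_zero_iff _ _).mpr (prod_dvd f hp hnd Finset.univ P hdvd)
  rw [hP0, IsLocalization.mk'_zero]

lemma Psi_isUnit_of (w : FractionRing (PSQuot K (∏ j, f j)))
    (h : IsUnit (Psi f hp hnd w)) : IsUnit w := by
  obtain ⟨p, q, rfl⟩ := IsLocalization.exists_mk'_eq
    (nonZeroDivisors (PSQuot K (∏ j, f j))) w
  obtain ⟨P, rfl⟩ := mk_surj _ p
  have hspec := IsLocalization.mk'_spec (FractionRing (PSQuot K (∏ j, f j)))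
    (psMk K (∏ j, f j) P) q
  have hPunit : IsUnit (psiPi f (psMk K (∏ j, f j) P)) := by
    have h1 := congrArg (Psi f hp hnd) hspec
    rw [map_mul, Psi_alg, Psi_alg] at h1
    rw [← h1]
    exact h.mul (psi_units f hp hnd q)
  have hnot : ∀ i, ¬ f i ∣ P := by
    intro i hdvd
    haveI := instDom f hp i
    haveI : IsDomain (FractionRing (PSQuot K (f i))) :=
      IsFractionRing.isDomain (PSQuot K (f i))
    have hu : IsUnit (psiPi f (psMk K (∏ j, f j) P) i) :=
      hPunit.map (Pi.evalRingHom _ i)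
    rw [psiPi_apply, psi_mk, (mk_eq_zero_iff _ _).mpr hdvd, map_zero] at hu
    exact not_isUnit_zero hu
  have hnz : psMk K (∏ j, f j) P ∈ nonZeroDivisors (PSQuot K (∏ j, f j)) :=
    (nzd_iff f hp hnd P).mpr hnot
  apply isUnit_of_mul_isUnit_left (y := algebraMap _ _ (q : PSQuot K (∏ j, f j)))
  rw [hspec]
  exact IsLocalization.map_units _ ⟨_, hnz⟩

variable (hirr : ∀ i, Irreducible (f i)) (hmon : ∀ i, (f i).Monic)

include hirr hmon in
lemma not_dvd_CX (i : Fin r) : ¬ f i ∣ (C PowerSeries.X : Polynomial (PowerSeries K)) := by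
  intro h
  have h0 : (C (PowerSeries.X : PowerSeries K) : Polynomial (PowerSeries K)) ≠ 0 :=
    C_ne_zero.mpr PowerSeries.X_ne_zero
  have hdeg := Polynomial.natDegree_le_of_dvd h h0
  rw [natDegree_C] at hdeg
  have hpos : 0 < (f i).natDegree :=
    (hmon i).natDegree_pos.mpr (fun h1 => (hirr i).not_isUnit (h1 ▸ isUnit_one))
  omega

include hp hirr hmon in
lemma not_dvd_CX_pow (i : Fin r) (k : ℕ) :
    ¬ f i ∣ (C PowerSeries.X : Polynomial (PowerSeries K)) ^ k := fun h =>
  not_dvd_CX f hirr hmon i ((hp i).dvd_of_dvd_pow h)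

variable (aa bb : Fin r → Polynomial (PowerSeries K)) (cc : Fin r → ℕ)
  (hab : ∀ i, aa i * f i + bb i * (∏ j ∈ Finset.univ.erase i, f j)
    = (C PowerSeries.X) ^ (cc i))

lemma mk_alg_pow_mul (q : Polynomial (PowerSeries K)) (k : ℕ) (W : Polynomial (PowerSeries K)) :
    algebraMap (PSQuot K q) (FractionRing (PSQuot K q)) (psMk K q ((C PowerSeries.X)^k * W))
      = (algebraMap (PSQuot K q) (FractionRing (PSQuot K q)) (psMk K q (C PowerSeries.X)))^k
        * algebraMap (PSQuot K q) (FractionRing (PSQuot K q)) (psMk K q W) := by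
  simp only [map_mul, map_pow]

lemma mk_alg_pow (q : Polynomial (PowerSeries K)) (k : ℕ) :
    algebraMap (PSQuot K q) (FractionRing (PSQuot K q)) (psMk K q ((C PowerSeries.X)^k))
      = (algebraMap (PSQuot K q) (FractionRing (PSQuot K q)) (psMk K q (C PowerSeries.X)))^k := by
  simp only [map_pow]

lemma mk_bh_ne (i j : Fin r) (hji : j ≠ i) (T : Polynomial (PowerSeries K)) :
    psMk K (f j) (bb i * (∏ k ∈ Finset.univ.erase i, f k) * T) = 0 := by
  rw [mk_eq_zero_iff]
  have h1 : f j ∣ ∏ k ∈ Finset.univ.erase i, f k :=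
    Finset.dvd_prod_of_mem f (Finset.mem_erase.mpr ⟨hji, Finset.mem_univ j⟩)
  exact (h1.mul_left (bb i)).mul_right T

include hab in
lemma mk_bh_self (i : Fin r) (T : Polynomial (PowerSeries K)) :
    psMk K (f i) (bb i * (∏ k ∈ Finset.univ.erase i, f k) * T)
      = psMk K (f i) ((C PowerSeries.X)^(cc i) * T) :=
  mk_eq_of_dvd_sub _ _ _ ⟨-(aa i * T), by linear_combination T * hab i⟩

include hp hirr hmon hab in
lemma not_dvd_den (i k : Fin r) (Q : Polynomial (PowerSeries K)) (hQ : ¬ f i ∣ Q) :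
    ¬ f k ∣ bb i * (∏ j ∈ Finset.univ.erase i, f j) * (Q - 1)
      + (C PowerSeries.X) ^ (cc i) := by
  intro hdvd
  by_cases hk : k = i
  · subst hk
    have h2 : (C PowerSeries.X : Polynomial (PowerSeries K))^(cc k) * Q
        = (bb k * (∏ j ∈ Finset.univ.erase k, f j) * (Q - 1) + (C PowerSeries.X) ^ (cc k))
          + f k * (aa k * (Q - 1)) := by
      linear_combination (1 - Q) * hab k
    have h3 : f k ∣ (C PowerSeries.X : Polynomial (PowerSeries K))^(cc k) * Q := by
      rw [h2]; exact dvd_add hdvd ⟨aa k * (Q - 1), rfl⟩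
    rcases (hp k).2.2 _ _ h3 with h4 | h4
    · exact not_dvd_CX_pow f hp hirr hmon k (cc k) h4
    · exact hQ h4
  · have h1 : f k ∣ bb i * (∏ j ∈ Finset.univ.erase i, f j) * (Q - 1) := by
      have : f k ∣ ∏ j ∈ Finset.univ.erase i, f j :=
        Finset.dvd_prod_of_mem f (Finset.mem_erase.mpr ⟨hk, Finset.mem_univ k⟩)
      exact (this.mul_left (bb i)).mul_right (Q - 1)
    have h2 : f k ∣ (C PowerSeries.X : Polynomial (PowerSeries K)) ^ (cc i) := by
      have := dvd_sub hdvd h1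
      simpa using this
    exact not_dvd_CX_pow f hp hirr hmon k (cc i) h2

include hirr hmon hab in
lemma Psi_surj : Function.Surjective (Psi f hp hnd) := by
  classical
  intro u
  have hrep : ∀ i, ∃ P Q : Polynomial (PowerSeries K), ¬ f i ∣ Q ∧
      u i * algebraMap (PSQuot K (f i)) (FractionRing (PSQuot K (f i))) (psMk K (f i) Q)
        = algebraMap (PSQuot K (f i)) (FractionRing (PSQuot K (f i))) (psMk K (f i) P) := by
    intro i
    haveI := instDom f hp i
    obtain ⟨p, q, hq⟩ := IsLocalization.exists_mk'_eq (nonZeroDivisors (PSQuot K (f i))) (u i)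
    obtain ⟨P, hP⟩ := mk_surj (f i) p
    obtain ⟨Q, hQ⟩ := mk_surj (f i) (q : PSQuot K (f i))
    refine ⟨P, Q, ?_, ?_⟩
    · intro hd
      have : psMk K (f i) Q ≠ 0 := by rw [hQ]; exact nonZeroDivisors.ne_zero q.2
      exact this ((mk_eq_zero_iff _ _).mpr hd)
    · rw [hP, hQ, ← hq]
      exact IsLocalization.mk'_spec _ p q
  choose P Q hQ hu using hrep
  have hDnzd : ∀ i, psMk K (∏ j, f j)
      (bb i * (∏ j ∈ Finset.univ.erase i, f j) * (Q i - 1) + (C PowerSeries.X) ^ (cc i))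
      ∈ nonZeroDivisors (PSQuot K (∏ j, f j)) := by
    intro i
    rw [nzd_iff f hp hnd]
    intro k
    exact not_dvd_den f hp hirr hmon aa bb cc hab i k (Q i) (hQ i)
  have hDu : ∀ i, IsUnit (algebraMap _ (FractionRing (PSQuot K (∏ j, f j)))
      (psMk K (∏ j, f j)
        (bb i * (∏ j ∈ Finset.univ.erase i, f j) * (Q i - 1) + (C PowerSeries.X) ^ (cc i)))) :=
    fun i => IsLocalization.map_units _ ⟨_, hDnzd i⟩
  refine ⟨∑ i, algebraMap _ _ (psMk K (∏ j, f j)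
      (bb i * (∏ j ∈ Finset.univ.erase i, f j) * (P i))) * ↑(hDu i).unit⁻¹, ?_⟩
  funext j
  haveI := instDom f hp j
  rw [map_sum, Finset.sum_apply]
  have hXunit : IsUnit (algebraMap (PSQuot K (f j)) (FractionRing (PSQuot K (f j)))
      (psMk K (f j) (C PowerSeries.X))) := by
    have hne : psMk K (f j) (C PowerSeries.X) ≠ 0 := fun h =>
      not_dvd_CX f hirr hmon j ((mk_eq_zero_iff _ _).mp h)
    exact IsLocalization.map_units _ ⟨_, mem_nonZeroDivisors_iff_ne_zero.mpr hne⟩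
  have hterm : ∀ i, Psi f hp hnd (algebraMap _ _ (psMk K (∏ j, f j)
      (bb i * (∏ j ∈ Finset.univ.erase i, f j) * (P i))) * ↑(hDu i).unit⁻¹) j
      = if i = j then u j else 0 := by
    intro i
    have hkey : Psi f hp hnd (algebraMap _ _ (psMk K (∏ j, f j)
        (bb i * (∏ j ∈ Finset.univ.erase i, f j) * (P i))) * ↑(hDu i).unit⁻¹) j
        * algebraMap (PSQuot K (f j)) (FractionRing (PSQuot K (f j))) (psMk K (f j)
          (bb i * (∏ j ∈ Finset.univ.erase i, f j) * (Q i - 1)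
            + (C PowerSeries.X) ^ (cc i)))
        = algebraMap (PSQuot K (f j)) (FractionRing (PSQuot K (f j))) (psMk K (f j)
            (bb i * (∏ j ∈ Finset.univ.erase i, f j) * (P i))) := by
      have h5 : (algebraMap _ (FractionRing (PSQuot K (∏ j, f j))) (psMk K (∏ j, f j)
          (bb i * (∏ j ∈ Finset.univ.erase i, f j) * (P i))) * ↑(hDu i).unit⁻¹)
          * algebraMap _ _ (psMk K (∏ j, f j)
            (bb i * (∏ j ∈ Finset.univ.erase i, f j) * (Q i - 1)
              + (C PowerSeries.X) ^ (cc i)))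
          = algebraMap _ _ (psMk K (∏ j, f j)
              (bb i * (∏ j ∈ Finset.univ.erase i, f j) * (P i))) := by
        rw [mul_assoc]
        nth_rewrite 2 [← (hDu i).unit_spec]
        rw [Units.inv_mul, mul_one]
      have h6 := congrFun (congrArg (Psi f hp hnd) h5) j
      rwa [map_mul, Pi.mul_apply, Psi_alg, Psi_alg, psiPi_apply, psiPi_apply,
        psi_mk, psi_mk] at h6
    by_cases hij : i = j
    · subst hij
      rw [if_pos rfl]
      have e1 : psMk K (f i)
          (bb i * (∏ j ∈ Finset.univ.erase i, f j) * (Q i - 1)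
            + (C PowerSeries.X) ^ (cc i))
          = psMk K (f i) ((C PowerSeries.X)^(cc i) * Q i) :=
        mk_eq_of_dvd_sub _ _ _ ⟨-(aa i * (Q i - 1)), by linear_combination (Q i - 1) * hab i⟩
      have e2 := mk_bh_self f aa bb cc hab i (P i)
      rw [e1, e2, mk_alg_pow_mul, mk_alg_pow_mul] at hkey
      have h7 : (algebraMap (PSQuot K (f i)) (FractionRing (PSQuot K (f i)))
            (psMk K (f i) (C PowerSeries.X)))^(cc i)
          * (Psi f hp hnd (algebraMap _ _ (psMk K (∏ j, f j)
              (bb i * (∏ j ∈ Finset.univ.erase i, f j) * (P i))) * ↑(hDu i).unit⁻¹) i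
            * algebraMap _ _ (psMk K (f i) (Q i)))
          = (algebraMap (PSQuot K (f i)) (FractionRing (PSQuot K (f i)))
              (psMk K (f i) (C PowerSeries.X)))^(cc i)
            * algebraMap _ _ (psMk K (f i) (P i)) := by
        rw [← hkey]; ring
      have h8 := (hXunit.pow (cc i)).mul_left_cancel h7
      have hqu : IsUnit (algebraMap (PSQuot K (f i)) (FractionRing (PSQuot K (f i)))
          (psMk K (f i) (Q i))) := by
        have hne : psMk K (f i) (Q i) ≠ 0 := fun h =>
          hQ i ((mk_eq_zero_iff _ _).mp h)
        exact IsLocalization.map_units _ ⟨_, mem_nonZeroDivisors_iff_ne_zero.mpr hne⟩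
      refine hqu.mul_right_cancel ?_
      rw [h8, hu i]
    · rw [if_neg hij]
      have e1 : psMk K (f j)
          (bb i * (∏ j ∈ Finset.univ.erase i, f j) * (Q i - 1)
            + (C PowerSeries.X) ^ (cc i))
          = psMk K (f j) ((C PowerSeries.X) ^ (cc i)) := by
        have := mk_bh_ne f bb i j (Ne.symm hij) (Q i - 1)
        rw [map_add, this, zero_add]
      have e2 : psMk K (f j) (bb i * (∏ j ∈ Finset.univ.erase i, f j) * (P i)) = 0 :=
        mk_bh_ne f bb i j (Ne.symm hij) (P i)
      rw [e1, e2, map_zero, mk_alg_pow] at hkey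
      exact ((hXunit.pow (cc i)).mul_left_eq_zero).mp hkey
  calc (∑ i, Psi f hp hnd (algebraMap _ _ (psMk K (∏ j, f j)
      (bb i * (∏ j ∈ Finset.univ.erase i, f j) * (P i))) * ↑(hDu i).unit⁻¹) j)
      = ∑ i, if i = j then u j else 0 := Finset.sum_congr rfl (fun i _ => hterm i)
    _ = u j := by simp

lemma component_integral (w : FractionRing (PSQuot K (∏ j, f j)))
    (hw : IsIntegral (PSQuot K (∏ j, f j)) w) (i : Fin r) :
    IsIntegral (PSQuot K (f i)) (Psi f hp hnd w i) := by
  obtain ⟨p, pm, pe⟩ := hw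
  refine ⟨p.map (phi f i), pm.map _, ?_⟩
  rw [eval₂_map]
  have h1 := Polynomial.hom_eval₂ p
    (algebraMap (PSQuot K (∏ j, f j)) (FractionRing (PSQuot K (∏ j, f j))))
    ((Pi.evalRingHom (fun i => FractionRing (PSQuot K (f i))) i).comp (Psi f hp hnd)) w
  rw [pe, map_zero] at h1
  have h2 : (((Pi.evalRingHom (fun i => FractionRing (PSQuot K (f i))) i).comp
      (Psi f hp hnd)).comp (algebraMap (PSQuot K (∏ j, f j))
        (FractionRing (PSQuot K (∏ j, f j)))))
      = (algebraMap (PSQuot K (f i)) (FractionRing (PSQuot K (f i)))).comp (phi f i) := by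
    refine RingHom.ext fun x => ?_
    have : Psi f hp hnd (algebraMap _ _ x) = psiPi f x := Psi_alg f hp hnd x
    simp only [RingHom.comp_apply, Pi.evalRingHom_apply]
    rw [this]
    rfl
  rw [h2] at h1
  exact h1.symm

lemma single_integral (i : Fin r) (v : FractionRing (PSQuot K (f i)))
    (hv : IsIntegral (PSQuot K (f i)) v) (W : FractionRing (PSQuot K (∏ j, f j)))
    (hW : Psi f hp hnd W = Pi.single i v) :
    IsIntegral (PSQuot K (∏ j, f j)) W := by
  classical
  haveI := instDom f hp i
  obtain ⟨p, pm, pe⟩ := hv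
  obtain ⟨q0, hq0⟩ := Polynomial.map_surjective (phi f i) (phi_surj f i) p
  obtain ⟨q, hq, hdeg, hqm⟩ :=
    Polynomial.lifts_and_degree_eq_and_monic ((Polynomial.mem_lifts p).mpr ⟨q0, hq0⟩) pm
  refine ⟨Polynomial.X * q, monic_X.mul hqm, ?_⟩
  apply Psi_inj f hp hnd
  rw [map_zero, Polynomial.hom_eval₂]
  have hcomp : (Psi f hp hnd).comp (algebraMap (PSQuot K (∏ j, f j))
      (FractionRing (PSQuot K (∏ j, f j)))) = psiPi f :=
    RingHom.ext (Psi_alg f hp hnd)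
  rw [hcomp, hW]
  funext j
  have h3 := Polynomial.hom_eval₂ (Polynomial.X * q) (psiPi f)
    (Pi.evalRingHom (fun i => FractionRing (PSQuot K (f i))) j) (Pi.single i v)
  have hcomp2 : (Pi.evalRingHom (fun i => FractionRing (PSQuot K (f i))) j).comp (psiPi f)
      = psi f j := RingHom.ext fun x => rfl
  rw [hcomp2] at h3
  show (Pi.evalRingHom (fun i => FractionRing (PSQuot K (f i))) j)
    (eval₂ (psiPi f) (Pi.single i v) (Polynomial.X * q)) = (0 : _)
  rw [h3, eval₂_mul, eval₂_X]
  simp only [Pi.evalRingHom_apply]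
  by_cases hji : j = i
  · subst hji
    rw [Pi.single_eq_same]
    have h4 : eval₂ (psi f j) v q = 0 := by
      have : eval₂ ((algebraMap (PSQuot K (f j)) (FractionRing (PSQuot K (f j)))).comp
          (phi f j)) v q = eval₂ (algebraMap (PSQuot K (f j))
            (FractionRing (PSQuot K (f j)))) v (q.map (phi f j)) := (eval₂_map _ _ _).symm
      rw [hq, pe] at this
      exact this
    rw [h4, mul_zero]
  · rw [Pi.single_eq_of_ne hji, zero_mul]

include hirr hmon hab in
lemma preimage_integral (v : (i : Fin r) → FractionRing (PSQuot K (f i)))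
    (hv : ∀ i, IsIntegral (PSQuot K (f i)) (v i))
    (W : FractionRing (PSQuot K (∏ j, f j))) (hW : Psi f hp hnd W = v) :
    IsIntegral (PSQuot K (∏ j, f j)) W := by
  classical
  have hsing : ∀ i, ∃ Wi, Psi f hp hnd Wi = Pi.single i (v i) :=
    fun i => Psi_surj f hp hnd hirr hmon aa bb cc hab (Pi.single i (v i))
  choose Wi hWi using hsing
  have hsum : W = ∑ i, Wi i := by
    apply Psi_inj f hp hnd
    rw [map_sum, hW]
    have : ∀ i ∈ Finset.univ, Psi f hp hnd (Wi i) = Pi.single i (v i) := fun i _ => hWi i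
    rw [Finset.sum_congr rfl this, Finset.univ_sum_single]
  have hmem : (W ∈ integralClosure (PSQuot K (∏ j, f j))
      (FractionRing (PSQuot K (∏ j, f j)))) := by
    rw [hsum]
    exact Subalgebra.sum_mem _ (fun i _ =>
      single_integral f hp hnd i (v i) (hv i) (Wi i) (hWi i))
  exact hmem

noncomputable def Theta : FractionRing (PSQuot K (∏ j, f j)) ≃+*
    ((i : Fin r) → FractionRing (PSQuot K (f i))) :=
  RingEquiv.ofBijective (Psi f hp hnd)
    ⟨Psi_inj f hp hnd, Psi_surj f hp hnd hirr hmon aa bb cc hab⟩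

lemma Theta_apply (w : FractionRing (PSQuot K (∏ j, f j))) :
    Theta f hp hnd hirr hmon aa bb cc hab w = Psi f hp hnd w := rfl

noncomputable def xElt' : FractionRing (PSQuot K (∏ j, f j)) :=
  algebraMap (PSQuot K (∏ j, f j)) (FractionRing (PSQuot K (∏ j, f j)))
    (psMk K (∏ j, f j) (C PowerSeries.X))

noncomputable def inclPi :
    ((i : Fin r) → (integralClosure (PSQuot K (f i)) (FractionRing (PSQuot K (f i)))))
      →+* ((i : Fin r) → FractionRing (PSQuot K (f i))) :=
  Pi.ringHom (fun i =>
    ((integralClosure (PSQuot K (f i)) (FractionRing (PSQuot K (f i)))).val.toRingHom).comp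
      (Pi.evalRingHom _ i))

lemma inclPi_apply
    (u : (i : Fin r) → (integralClosure (PSQuot K (f i)) (FractionRing (PSQuot K (f i)))))
    (i : Fin r) : inclPi f u i = ↑(u i) := rfl

noncomputable def F0 :
    ((i : Fin r) → (integralClosure (PSQuot K (f i)) (FractionRing (PSQuot K (f i)))))
      →+* FractionRing (PSQuot K (∏ j, f j)) :=
  (Theta f hp hnd hirr hmon aa bb cc hab).symm.toRingHom.comp (inclPi f)

include hirr hmon hab in
lemma F0_mem
    (u : (i : Fin r) → (integralClosure (PSQuot K (f i)) (FractionRing (PSQuot K (f i))))) :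
    F0 f hp hnd hirr hmon aa bb cc hab u
      ∈ integralClosure (PSQuot K (∏ j, f j)) (FractionRing (PSQuot K (∏ j, f j))) := by
  refine preimage_integral f hp hnd hirr hmon aa bb cc hab
    (fun i => ↑(u i)) (fun i => (u i).2) _ ?_
  show Psi f hp hnd ((Theta f hp hnd hirr hmon aa bb cc hab).symm (inclPi f u)) = _
  have h1 : Psi f hp hnd ((Theta f hp hnd hirr hmon aa bb cc hab).symm (inclPi f u))
      = Theta f hp hnd hirr hmon aa bb cc hab
        ((Theta f hp hnd hirr hmon aa bb cc hab).symm (inclPi f u)) := rfl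
  rw [h1, RingEquiv.apply_symm_apply]
  rfl

noncomputable def Ehom :
    ((i : Fin r) → (integralClosure (PSQuot K (f i)) (FractionRing (PSQuot K (f i)))))
      →+* (integralClosure (PSQuot K (∏ j, f j)) (FractionRing (PSQuot K (∏ j, f j)))) :=
  (F0 f hp hnd hirr hmon aa bb cc hab).codRestrict _ (F0_mem f hp hnd hirr hmon aa bb cc hab)

lemma Ehom_coe
    (u : (i : Fin r) → (integralClosure (PSQuot K (f i)) (FractionRing (PSQuot K (f i))))) :
    (Ehom f hp hnd hirr hmon aa bb cc hab u : FractionRing (PSQuot K (∏ j, f j)))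
      = F0 f hp hnd hirr hmon aa bb cc hab u := rfl

include hirr hmon hab in
lemma Ehom_bij : Function.Bijective (Ehom f hp hnd hirr hmon aa bb cc hab) := by
  constructor
  · intro u v h
    have h0 : F0 f hp hnd hirr hmon aa bb cc hab u
        = F0 f hp hnd hirr hmon aa bb cc hab v := by
      rw [← Ehom_coe, ← Ehom_coe, h]
    have h1 : inclPi f u = inclPi f v :=
      (Theta f hp hnd hirr hmon aa bb cc hab).symm.injective h0
    funext i
    exact Subtype.ext (congrFun h1 i)
  · intro w
    have hw : IsIntegral (PSQuot K (∏ j, f j))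
        (w : FractionRing (PSQuot K (∏ j, f j))) := w.2
    refine ⟨fun i => ⟨Psi f hp hnd (w : FractionRing (PSQuot K (∏ j, f j))) i,
      component_integral f hp hnd _ hw i⟩, ?_⟩
    apply Subtype.ext
    rw [Ehom_coe]
    show (Theta f hp hnd hirr hmon aa bb cc hab).symm _ = _
    have h1 : inclPi f (fun i => ⟨Psi f hp hnd (w : FractionRing (PSQuot K (∏ j, f j))) i,
        component_integral f hp hnd _ hw i⟩)
        = Theta f hp hnd hirr hmon aa bb cc hab (w : FractionRing (PSQuot K (∏ j, f j))) :=
      rfl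
    rw [h1, RingEquiv.symm_apply_apply]

noncomputable def bigEquiv :
    ((i : Fin r) → (integralClosure (PSQuot K (f i)) (FractionRing (PSQuot K (f i)))))
      ≃+* (integralClosure (PSQuot K (∏ j, f j)) (FractionRing (PSQuot K (∏ j, f j)))) :=
  RingEquiv.ofBijective _ (Ehom_bij f hp hnd hirr hmon aa bb cc hab)

include hirr hmon hab in
lemma main_formula (t : Fin r → Polynomial (PowerSeries K)) :
    ∃ z : Fin r → FractionRing (PSQuot K (∏ j, f j)),
      (∀ i, z i * (xElt' f) ^ (cc i) =
        algebraMap (PSQuot K (∏ j, f j)) (FractionRing (PSQuot K (∏ j, f j)))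
          (psMk K (∏ j, f j) (bb i * (∏ j ∈ Finset.univ.erase i, f j) * t i))) ∧
      (bigEquiv f hp hnd hirr hmon aa bb cc hab (fun i =>
          ⟨algebraMap (PSQuot K (f i)) (FractionRing (PSQuot K (f i))) (psMk K (f i) (t i)),
            (integralClosure _ _).algebraMap_mem _⟩)
          : FractionRing (PSQuot K (∏ j, f j)))
        = ∑ i, z i := by
  classical
  have hxnzd : psMk K (∏ j, f j) (C PowerSeries.X)
      ∈ nonZeroDivisors (PSQuot K (∏ j, f j)) :=
    (nzd_iff f hp hnd _).mpr (fun i => not_dvd_CX f hirr hmon i)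
  have hxu : IsUnit (xElt' f) := IsLocalization.map_units _ ⟨_, hxnzd⟩
  set z : Fin r → FractionRing (PSQuot K (∏ j, f j)) := fun i =>
    algebraMap _ _ (psMk K (∏ j, f j) (bb i * (∏ j ∈ Finset.univ.erase i, f j) * t i))
      * (↑(hxu.unit⁻¹))^(cc i) with hzdef
  have hz1 : ∀ i, z i * (xElt' f) ^ (cc i) =
      algebraMap (PSQuot K (∏ j, f j)) (FractionRing (PSQuot K (∏ j, f j)))
        (psMk K (∏ j, f j) (bb i * (∏ j ∈ Finset.univ.erase i, f j) * t i)) := by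
    intro i
    have hone : ((↑(hxu.unit⁻¹) : FractionRing (PSQuot K (∏ j, f j))))^(cc i)
        * (xElt' f)^(cc i) = 1 := by
      rw [← mul_pow]
      nth_rewrite 2 [← hxu.unit_spec]
      rw [Units.inv_mul, one_pow]
    rw [hzdef]
    simp only []
    rw [mul_assoc, hone, mul_one]
  refine ⟨z, hz1, ?_⟩
  have hE : (bigEquiv f hp hnd hirr hmon aa bb cc hab (fun i =>
      ⟨algebraMap (PSQuot K (f i)) (FractionRing (PSQuot K (f i))) (psMk K (f i) (t i)),
        (integralClosure _ _).algebraMap_mem _⟩)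
        : FractionRing (PSQuot K (∏ j, f j)))
      = (Theta f hp hnd hirr hmon aa bb cc hab).symm
          (fun i => algebraMap (PSQuot K (f i)) (FractionRing (PSQuot K (f i)))
            (psMk K (f i) (t i))) := rfl
  rw [hE]
  suffices hsuff : (fun i => algebraMap (PSQuot K (f i)) (FractionRing (PSQuot K (f i)))
      (psMk K (f i) (t i))) = Theta f hp hnd hirr hmon aa bb cc hab (∑ i, z i) by
    rw [hsuff, RingEquiv.symm_apply_apply]
  rw [map_sum]
  funext j
  haveI := instDom f hp j
  rw [Finset.sum_apply]
  have hXunit : IsUnit (algebraMap (PSQuot K (f j)) (FractionRing (PSQuot K (f j)))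
      (psMk K (f j) (C PowerSeries.X))) := by
    have hne : psMk K (f j) (C PowerSeries.X) ≠ 0 := fun h =>
      not_dvd_CX f hirr hmon j ((mk_eq_zero_iff _ _).mp h)
    exact IsLocalization.map_units _ ⟨_, mem_nonZeroDivisors_iff_ne_zero.mpr hne⟩
  have hterm : ∀ i, Theta f hp hnd hirr hmon aa bb cc hab (z i) j
      = if i = j then algebraMap (PSQuot K (f j)) (FractionRing (PSQuot K (f j)))
          (psMk K (f j) (t j)) else 0 := by
    intro i
    have hkey : Theta f hp hnd hirr hmon aa bb cc hab (z i) j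
        * (algebraMap (PSQuot K (f j)) (FractionRing (PSQuot K (f j)))
            (psMk K (f j) (C PowerSeries.X)))^(cc i)
        = algebraMap (PSQuot K (f j)) (FractionRing (PSQuot K (f j)))
            (psMk K (f j) (bb i * (∏ j ∈ Finset.univ.erase i, f j) * t i)) := by
      have h6 := congrFun (congrArg (Theta f hp hnd hirr hmon aa bb cc hab) (hz1 i)) j
      rw [map_mul, map_pow, Pi.mul_apply, Pi.pow_apply] at h6
      have hx : Theta f hp hnd hirr hmon aa bb cc hab (xElt' f) j
          = algebraMap (PSQuot K (f j)) (FractionRing (PSQuot K (f j)))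
              (psMk K (f j) (C PowerSeries.X)) := by
        rw [Theta_apply]
        show Psi f hp hnd (algebraMap _ _ (psMk K (∏ j, f j) (C PowerSeries.X))) j = _
        rw [Psi_alg]
        exact psi_mk f j _
      have hn : Theta f hp hnd hirr hmon aa bb cc hab (algebraMap _ _
          (psMk K (∏ j, f j) (bb i * (∏ j ∈ Finset.univ.erase i, f j) * t i))) j
          = algebraMap (PSQuot K (f j)) (FractionRing (PSQuot K (f j)))
              (psMk K (f j) (bb i * (∏ j ∈ Finset.univ.erase i, f j) * t i)) := by
        rw [Theta_apply, Psi_alg]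
        exact psi_mk f j _
      rw [hx, hn] at h6
      exact h6
    by_cases hij : i = j
    · subst hij
      rw [if_pos rfl]
      have e2 := mk_bh_self f aa bb cc hab i (t i)
      rw [e2, mk_alg_pow_mul] at hkey
      have h7 : (algebraMap (PSQuot K (f i)) (FractionRing (PSQuot K (f i)))
            (psMk K (f i) (C PowerSeries.X)))^(cc i)
          * (Theta f hp hnd hirr hmon aa bb cc hab (z i) i)
          = (algebraMap (PSQuot K (f i)) (FractionRing (PSQuot K (f i)))
              (psMk K (f i) (C PowerSeries.X)))^(cc i)
            * algebraMap _ _ (psMk K (f i) (t i)) := by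
        rw [← hkey]; ring
      exact (hXunit.pow (cc i)).mul_left_cancel h7
    · rw [if_neg hij]
      have e2 : psMk K (f j) (bb i * (∏ j ∈ Finset.univ.erase i, f j) * t i) = 0 :=
        mk_bh_ne f bb i j (Ne.symm hij) (t i)
      rw [e2, map_zero] at hkey
      exact ((hXunit.pow (cc i)).mul_left_eq_zero).mp hkey
  calc (algebraMap (PSQuot K (f j)) (FractionRing (PSQuot K (f j)))) (psMk K (f j) (t j))
      = ∑ i, if i = j then algebraMap (PSQuot K (f j)) (FractionRing (PSQuot K (f j)))
          (psMk K (f j) (t j)) else 0 := by simp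
    _ = ∑ i, Theta f hp hnd hirr hmon aa bb cc hab (z i) j :=
        (Finset.sum_congr rfl (fun i _ => (hterm i).symm))

omit hp hnd

lemma ofPS_eq_algebraMap :
    (HahnSeries.ofPowerSeries ℤ K : PowerSeries K →+* HahnSeries ℤ K)
      = algebraMap (PowerSeries K) (LaurentSeries K) := rfl

include hirr hmon in
lemma irr_laurent (i : Fin r) :
    Irreducible ((f i).map (algebraMap (PowerSeries K) (LaurentSeries K))) :=
  ((hmon i).irreducible_iff_irreducible_map_fraction_map).mp (hirr i)

variable (hdist : ∀ i j, i ≠ j → f i ≠ f j)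

include hirr hmon hdist in
lemma coprime_laurent (i : Fin r) :
    IsCoprime ((f i).map (HahnSeries.ofPowerSeries ℤ K))
      ((∏ j ∈ Finset.univ.erase i, f j).map (HahnSeries.ofPowerSeries ℤ K)) := by
  rw [ofPS_eq_algebraMap]
  haveI hpir : IsPrincipalIdealRing (Polynomial (LaurentSeries K)) :=
    EuclideanDomain.to_principal_ideal_domain
  haveI : IsBezout (Polynomial (LaurentSeries K)) :=
    @IsBezout.of_isPrincipalIdealRing _ _ hpir
  refine ((Irreducible.coprime_iff_not_dvd (R := Polynomial (LaurentSeries K))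
    (irr_laurent f hirr hmon i)).mpr) ?_
  intro hdvd
  rw [Polynomial.map_prod] at hdvd
  have hFprime : Prime ((f i).map (algebraMap (PowerSeries K) (LaurentSeries K))) :=
    (irr_laurent f hirr hmon i).prime
  obtain ⟨j, hjmem, hjdvd⟩ := hFprime.exists_mem_finset_dvd hdvd
  have heq : (f i).map (algebraMap (PowerSeries K) (LaurentSeries K))
      = (f j).map (algebraMap (PowerSeries K) (LaurentSeries K)) :=
    Polynomial.eq_of_monic_of_associated ((hmon i).map _) ((hmon j).map _)
      ((irr_laurent f hirr hmon i).associated_of_dvd (irr_laurent f hirr hmon j) hjdvd)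
  have hfij : f i = f j :=
    Polynomial.map_injective _
      (IsFractionRing.injective (PowerSeries K) (LaurentSeries K)) heq
  exact hdist i j (Ne.symm (Finset.mem_erase.mp hjmem).1) hfij

lemma smul_eq_C_mul' (d : PowerSeries K) (p : Polynomial (LaurentSeries K)) :
    d • p = Polynomial.C (algebraMap (PowerSeries K) (LaurentSeries K) d) * p := by
  rw [Algebra.smul_def, Polynomial.algebraMap_apply]

include hirr hmon hdist in
lemma bezout (i : Fin r) :
    ∃ A Bz : Polynomial (PowerSeries K), ∃ c : ℕ,
      A * f i + Bz * (∏ j ∈ Finset.univ.erase i, f j) = (C PowerSeries.X)^c := by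
  obtain ⟨u, v, huv⟩ := by
    have h := coprime_laurent f hirr hmon hdist i
    rwa [ofPS_eq_algebraMap] at h
  obtain ⟨d1, hd1⟩ := IsLocalization.integerNormalization_map_to_map
    (nonZeroDivisors (PowerSeries K)) (S := LaurentSeries K) u
  obtain ⟨d2, hd2⟩ := IsLocalization.integerNormalization_map_to_map
    (nonZeroDivisors (PowerSeries K)) (S := LaurentSeries K) v
  set U := IsLocalization.integerNormalization (nonZeroDivisors (PowerSeries K)) u with hU
  set V := IsLocalization.integerNormalization (nonZeroDivisors (PowerSeries K)) v with hV
  obtain ⟨d, hd⟩ : ∃ d : PowerSeries K, ((↑d1 : PowerSeries K) * ↑d2) = d := ⟨_, rfl⟩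
  have hmap : (C (↑d2 : PowerSeries K) * U * f i
      + C (↑d1 : PowerSeries K) * V * (∏ j ∈ Finset.univ.erase i, f j)).map
        (algebraMap (PowerSeries K) (LaurentSeries K))
      = (C d).map (algebraMap (PowerSeries K) (LaurentSeries K)) := by
    rw [Polynomial.map_add, Polynomial.map_mul, Polynomial.map_mul, Polynomial.map_mul,
      Polynomial.map_mul, Polynomial.map_C, Polynomial.map_C, Polynomial.map_C, hd1, hd2,
      smul_eq_C_mul', smul_eq_C_mul', ← hd, map_mul]
    calc Polynomial.C (algebraMap (PowerSeries K) (LaurentSeries K) ↑d2)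
          * (Polynomial.C (algebraMap (PowerSeries K) (LaurentSeries K) ↑d1) * u)
          * ((f i).map (algebraMap (PowerSeries K) (LaurentSeries K)))
        + Polynomial.C (algebraMap (PowerSeries K) (LaurentSeries K) ↑d1)
          * (Polynomial.C (algebraMap (PowerSeries K) (LaurentSeries K) ↑d2) * v)
          * ((∏ j ∈ Finset.univ.erase i, f j).map
              (algebraMap (PowerSeries K) (LaurentSeries K)))
        = Polynomial.C (algebraMap (PowerSeries K) (LaurentSeries K) ↑d1)
          * Polynomial.C (algebraMap (PowerSeries K) (LaurentSeries K) ↑d2)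
          * (u * ((f i).map (algebraMap (PowerSeries K) (LaurentSeries K)))
            + v * ((∏ j ∈ Finset.univ.erase i, f j).map
                (algebraMap (PowerSeries K) (LaurentSeries K)))) := by ring
      _ = Polynomial.C (algebraMap (PowerSeries K) (LaurentSeries K) ↑d1)
          * Polynomial.C (algebraMap (PowerSeries K) (LaurentSeries K) ↑d2) := by
          rw [huv, mul_one]
      _ = _ := by simp [Polynomial.map_mul, Polynomial.map_C]
  have hWC : C (↑d2 : PowerSeries K) * U * f i
      + C (↑d1 : PowerSeries K) * V * (∏ j ∈ Finset.univ.erase i, f j) = C d :=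
    Polynomial.map_injective _
      (IsFractionRing.injective (PowerSeries K) (LaurentSeries K)) hmap
  have hdne : d ≠ 0 := by
    rw [← hd]
    exact nonZeroDivisors.ne_zero (Submonoid.mul_mem _ d1.2 d2.2)
  have horder : d.order < ⊤ :=
    lt_top_iff_ne_top.mpr (fun h => hdne (PowerSeries.order_eq_top.mp h))
  obtain ⟨c0, hc0⟩ : ∃ c : ℕ, d.order.toNat = c := ⟨_, rfl⟩
  have hdvdX : PowerSeries.X ^ c0 ∣ d := by
    rw [← hc0]; exact PowerSeries.X_pow_order_dvd
  obtain ⟨e, he⟩ := hdvdX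
  have hce : PowerSeries.constantCoeff e ≠ 0 := by
    have hco := PowerSeries.coeff_order hdne
    rw [hc0, he] at hco
    have h6 := PowerSeries.coeff_X_pow_mul e c0 0
    rw [zero_add] at h6
    rw [h6] at hco
    rwa [PowerSeries.coeff_zero_eq_constantCoeff] at hco
  have heu : IsUnit e := PowerSeries.isUnit_iff_constantCoeff.mpr (isUnit_iff_ne_zero.mpr hce)
  obtain ⟨w, hw⟩ := heu
  refine ⟨C (↑w⁻¹ : PowerSeries K) * (C (↑d2 : PowerSeries K) * U),
    C (↑w⁻¹ : PowerSeries K) * (C (↑d1 : PowerSeries K) * V), c0, ?_⟩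
  have h1 : C (↑w⁻¹ : PowerSeries K) * (C (↑d2 : PowerSeries K) * U) * f i
      + C (↑w⁻¹ : PowerSeries K) * (C (↑d1 : PowerSeries K) * V)
        * (∏ j ∈ Finset.univ.erase i, f j)
      = C (↑w⁻¹ : PowerSeries K) * (C (↑d2 : PowerSeries K) * U * f i
          + C (↑d1 : PowerSeries K) * V * (∏ j ∈ Finset.univ.erase i, f j)) := by
    ring
  rw [h1]
  rw [hWC]
  rw [he]
  rw [← C_mul]
  have h2 : (↑w⁻¹ : PowerSeries K) * (PowerSeries.X ^ c0 * e)
      = PowerSeries.X ^ c0 := by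
    rw [← hw, mul_comm (PowerSeries.X ^ c0) _, ← mul_assoc, Units.inv_mul, one_mul]
  rw [h2, C_pow]

end SplitAux

/-- **Splitting of the normalization along the branches.**
If `f_1, …, f_r` are the distinct irreducible Weierstrass factors of `f`, then
`f_i` is coprime to `h_i = ∏_{j≠i} f_j` in `K((X))[Y]`, there are Bézout relations
`a_i f_i + b_i h_i = X^{c_i}` in `K[[X]][Y]`, and the normalization of
`K[[X]][Y]/⟨f_1⋯f_r⟩` splits as the direct sum of the normalizations of the
`K[[X]][Y]/⟨f_i⟩`, via `(t_1, …, t_r) ↦ ∑_i b_i h_i t_i / X^{c_i}`. -/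
theorem splitting_of_normalization
    (K : Type) [Field K] [CharZero K] (r : ℕ) (hr : 0 < r)
    (f : Fin r → Polynomial (PowerSeries K))
    (hirr : ∀ i, Irreducible (f i)) (hmon : ∀ i, (f i).Monic)
    (hW : ∀ i, ∀ j < (f i).natDegree, PowerSeries.constantCoeff ((f i).coeff j) = 0)
    (hdist : ∀ i j, i ≠ j → f i ≠ f j) :
    (∀ i : Fin r,
      IsCoprime ((f i).map (HahnSeries.ofPowerSeries ℤ K))
        ((∏ j ∈ Finset.univ.erase i, f j).map (HahnSeries.ofPowerSeries ℤ K))) ∧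
    ∃ (a b : Fin r → Polynomial (PowerSeries K)) (c : Fin r → ℕ),
      (∀ i, a i * f i + b i * (∏ j ∈ Finset.univ.erase i, f j) =
        (C PowerSeries.X) ^ (c i)) ∧
      ∃ equiv : (∀ i : Fin r,
            (integralClosure (PSQuot K (f i)) (FractionRing (PSQuot K (f i))))) ≃+*
          (integralClosure (PSQuot K (∏ i, f i)) (FractionRing (PSQuot K (∏ i, f i)))),
        ∀ t : Fin r → Polynomial (PowerSeries K),
          ∃ z : Fin r → FractionRing (PSQuot K (∏ i, f i)),
            (∀ i, z i * (xElt K (∏ i, f i)) ^ (c i) =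
              algebraMap (PSQuot K (∏ i, f i)) (FractionRing (PSQuot K (∏ i, f i)))
                (psMk K (∏ i, f i) (b i * (∏ j ∈ Finset.univ.erase i, f j) * t i))) ∧
            (equiv (fun i =>
                ⟨algebraMap (PSQuot K (f i)) (FractionRing (PSQuot K (f i)))
                    (psMk K (f i) (t i)),
                  (integralClosure _ _).algebraMap_mem _⟩) : FractionRing (PSQuot K (∏ i, f i)))
              = ∑ i, z i := by
  classical
  have hp : ∀ i, Prime (f i) := fun i =>
    UniqueFactorizationMonoid.irreducible_iff_prime.mp (hirr i)
  have hnd : ∀ i j, i ≠ j → ¬ f i ∣ f j := fun i j hij hdvd =>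
    hdist i j hij (Polynomial.eq_of_monic_of_associated (hmon i) (hmon j)
      ((hirr i).associated_of_dvd (hirr j) hdvd))
  refine ⟨fun i => SplitAux.coprime_laurent f hirr hmon hdist i, ?_⟩
  have key := fun i => SplitAux.bezout f hirr hmon hdist i
  choose aa bbf cf hab using key
  exact ⟨aa, bbf, cf, hab, SplitAux.bigEquiv f hp hnd hirr hmon aa bbf cf hab,
    fun t => SplitAux.main_formula f hp hnd hirr hmon aa bbf cf hab t⟩
end

section
/- Let g ∈ K[[X]][Y] be an irreducible Weierstrass polynomial of Y-degree m whose Puiseux expansions γ_1, …, γ_m all agree in terms of degree < t and have pairwise distinct conjugate terms α_i X^t, i.e. γ_i = a_1 X^{d_1} + ⋯ + a_k X^{d_k} + α_i X^t + ⋯ with a_j ∈ K, d_j ∈ ℕ. Let γ̄_i denote the truncation of γ_i to degree d_k, and set p_d = (Y − γ̄_1)⋯(Y − γ̄_d) ∈ K[X,Y] for 1 ≤ d ≤ m−1. Then p_d has maximal valuation v_g among all monic polynomials of Y-degree d, i.e. its integrality exponent is maximal. -/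
open Polynomial

set_option synthInstance.maxHeartbeats 1000000
set_option maxHeartbeats 2000000

section helpers
variable {L : Type} [Field L]

lemma hahn_orderTop_mul' {x y : HahnSeries ℚ L} (hx : x ≠ 0) (hy : y ≠ 0) :
    (x * y).orderTop = x.orderTop + y.orderTop := by
  rw [← HahnSeries.order_eq_orderTop_of_ne_zero hx, ← HahnSeries.order_eq_orderTop_of_ne_zero hy,
    ← HahnSeries.order_eq_orderTop_of_ne_zero (mul_ne_zero hx hy),
    HahnSeries.order_mul_of_ne_zero (mul_ne_zero (HahnSeries.leadingCoeff_ne_zero.2 hx)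
      (HahnSeries.leadingCoeff_ne_zero.2 hy)), WithTop.coe_add]

lemma hahn_orderTop_prod {ι : Type*} (s : Finset ι) (f : ι → HahnSeries ℚ L)
    (hf : ∀ j ∈ s, f j ≠ 0) :
    (∏ j ∈ s, f j).orderTop = ∑ j ∈ s, (f j).orderTop := by
  classical
  induction s using Finset.cons_induction with
  | empty => simp [HahnSeries.orderTop_one]
  | cons a s ha ih =>
    rw [Finset.prod_cons, Finset.sum_cons,
      hahn_orderTop_mul' (hf a (Finset.mem_cons_self a s))
        (Finset.prod_ne_zero_iff.2 fun j hj => hf j (Finset.mem_cons_of_mem hj)),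
      ih fun j hj => hf j (Finset.mem_cons_of_mem hj)]

lemma hahn_lt_orderTop_sum {ι : Type*} (s : Finset ι) (f : ι → HahnSeries ℚ L)
    {c : WithTop ℚ} (hc : c ≠ ⊤) (h : ∀ j ∈ s, c < (f j).orderTop) :
    c < (∑ j ∈ s, f j).orderTop := by
  classical
  induction s using Finset.cons_induction with
  | empty => simpa using lt_top_iff_ne_top.2 hc
  | cons a s ha ih =>
    rw [Finset.sum_cons]
    refine lt_of_lt_of_le ?_ HahnSeries.min_orderTop_le_orderTop_add
    exact lt_min (h a (Finset.mem_cons_self a s))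
      (ih fun j hj => h j (Finset.mem_cons_of_mem hj))

lemma hahn_orderTop_eq {x : HahnSeries ℚ L} {t : ℚ} (h0 : x.coeff t ≠ 0)
    (hlt : ∀ s < t, x.coeff s = 0) : x.orderTop = (t : WithTop ℚ) := by
  have hx : x ≠ 0 := HahnSeries.ne_zero_of_coeff_ne_zero h0
  have h1 : x.orderTop ≤ (t : WithTop ℚ) := HahnSeries.orderTop_le_of_coeff_ne_zero h0
  have h2 : x.orderTop = (x.order : WithTop ℚ) := (HahnSeries.order_eq_orderTop_of_ne_zero hx).symm
  have h3 : x.coeff x.order ≠ 0 := fun h => hx (HahnSeries.coeff_order_eq_zero.1 h)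
  rw [h2] at h1 ⊢
  rcases lt_or_eq_of_le (WithTop.coe_le_coe.1 h1) with h | h
  · exact absurd (hlt _ h) h3
  · exact_mod_cast h

end helpers

/-- **Maximality of the truncated factors in the one-conjugate-term case.**
Suppose the Puiseux expansions `γ_i` of the irreducible Weierstrass polynomial `g`
all agree with a common rational part `ρ` (exponents in `ℕ`, coefficients in `K`,
finitely many terms) in all degrees `< t`, and have pairwise distinct (conjugate,
non-rational) coefficients `α_i` in degree `t`.  Then the polynomial
`p_d = (Y - γ̄_1)⋯(Y - γ̄_d) = (Y - ρ)^d` built from the truncations of the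
expansions to their rational part has maximal valuation `v_g` among all monic
polynomials of degree `d` in `Y`, i.e. maximal integrality exponent. -/
theorem truncated_factor_maximal_one_conjugate_term
    (K L : Type) [Field K] [Field L] [Algebra K L] [CharZero K] [IsAlgClosed L]
    (m d : ℕ) (hd : 1 ≤ d) (hdm : d < m)
    (g : Polynomial (PowerSeries K)) (hirr : Irreducible g) (hmon : g.Monic)
    (hdeg : g.natDegree = m)
    (hW : ∀ j < m, PowerSeries.constantCoeff (g.coeff j) = 0)
    (γ : Fin m → HahnSeries ℚ L)
    (hfact : g.map (toHahn K L) = ∏ i, (X - C (γ i)))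
    (t : ℚ) (ρ : HahnSeries ℚ L)
    (hρfin : ρ.support.Finite)
    (hρnat : ∀ q ∈ ρ.support, ∃ k : ℕ, q = (k : ℚ))
    (hρK : ∀ q : ℚ, ρ.coeff q ∈ (algebraMap K L).range)
    (hρlt : ∀ q ∈ ρ.support, q < t)
    (hagree : ∀ i, ∀ q : ℚ, q < t → (γ i).coeff q = ρ.coeff q)
    (hα : ∀ i, (γ i).coeff t ≠ 0)
    (hαdist : ∀ i j, i ≠ j → (γ i).coeff t ≠ (γ j).coeff t) :
    ∀ q : Polynomial (HahnSeries ℚ L), q.Monic → q.natDegree = d →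
      (∀ i, IsPuiseux (q.coeff i)) →
      vg γ q ≤ vg γ ((X - C ρ) ^ d) := by
  classical
  intro q hqm hqd _
  -- injectivity of γ
  have hγinj : Function.Injective γ := by
    intro i j hij
    by_contra h
    exact hαdist i j h (by rw [hij])
  -- orderTop of differences of roots
  have hdiff : ∀ i j : Fin m, i ≠ j → (γ i - γ j).orderTop = (t : WithTop ℚ) := by
    intro i j hij
    apply hahn_orderTop_eq
    · simpa [HahnSeries.coeff_sub] using sub_ne_zero.2 (hαdist i j hij)
    · intro s hs
      simp [HahnSeries.coeff_sub, hagree i s hs, hagree j s hs]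
  have hρt : ρ.coeff t = 0 := by
    by_contra h
    exact absurd (hρlt t h) (lt_irrefl t)
  have hgr : ∀ i : Fin m, (γ i - ρ).orderTop = (t : WithTop ℚ) := by
    intro i
    apply hahn_orderTop_eq
    · simpa [HahnSeries.coeff_sub, hρt] using hα i
    · intro s hs
      simp [HahnSeries.coeff_sub, hagree i s hs]
  have hgrne : ∀ i : Fin m, γ i - ρ ≠ 0 := by
    intro i h
    have := hgr i
    rw [h] at this
    simp at this
  -- value of vg on the power
  have hm0 : 0 < m := lt_of_le_of_lt (Nat.zero_le d) hdm
  have hvgp : vg γ ((X - C ρ) ^ d) = ((d * t : ℚ) : WithTop ℚ) := by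
    have hev : ∀ i : Fin m,
        (((X - C ρ) ^ d).eval (γ i)).orderTop = ((d * t : ℚ) : WithTop ℚ) := by
      intro i
      have hpow : (γ i - ρ) ^ d = ∏ _j ∈ Finset.range d, (γ i - ρ) := by
        rw [Finset.prod_const, Finset.card_range]
      rw [eval_pow, eval_sub, eval_X, eval_C, hpow,
        hahn_orderTop_prod _ _ (fun j _ => hgrne i), Finset.sum_congr rfl
          (fun j _ => hgr i), Finset.sum_const, Finset.card_range,
        ← WithTop.coe_nsmul, nsmul_eq_mul]
    unfold vg
    rw [Finset.inf_congr rfl (fun i _ => hev i)]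
    exact Finset.inf_const (Finset.univ_nonempty_iff.2 ⟨⟨0, hm0⟩⟩) _
  rw [hvgp]
  by_contra hcon
  push_neg at hcon
  have hqv : ∀ i : Fin m, ((d * t : ℚ) : WithTop ℚ) < (q.eval (γ i)).orderTop :=
    fun i => lt_of_lt_of_le hcon (Finset.inf_le (Finset.mem_univ i))
  -- Lagrange interpolation at d + 1 of the roots
  set v : Fin (d + 1) → HahnSeries ℚ L := fun i => γ (Fin.castLE hdm i) with hv
  have hvinj : Set.InjOn v (Finset.univ : Finset (Fin (d + 1))) := by
    intro i _ j _ hij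
    exact (Fin.strictMono_castLE hdm).injective (hγinj hij)
  have hvne : ∀ i j : Fin (d + 1), i ≠ j → v i - v j ≠ 0 := by
    intro i j hij
    refine sub_ne_zero.2 fun h => hij ?_
    exact (Fin.strictMono_castLE hdm).injective (hγinj h)
  have hvdiff : ∀ i j : Fin (d + 1), i ≠ j →
      (v i - v j).orderTop = (t : WithTop ℚ) := by
    intro i j hij
    exact hdiff _ _ fun h => hij ((Fin.strictMono_castLE hdm).injective h)
  set D : Fin (d + 1) → HahnSeries ℚ L :=
    fun i => ∏ j ∈ Finset.univ.erase i, (v i - v j) with hD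
  have hDne : ∀ i, D i ≠ 0 := fun i =>
    Finset.prod_ne_zero_iff.2 fun j hj => hvne i j (Finset.ne_of_mem_erase hj).symm
  have hcard : (Finset.univ : Finset (Fin (d + 1))).card = d + 1 := by simp
  have hDord : ∀ i, (D i).orderTop = ((d * t : ℚ) : WithTop ℚ) := by
    intro i
    rw [hD, hahn_orderTop_prod _ _
        (fun j hj => hvne i j (Finset.ne_of_mem_erase hj).symm),
      Finset.sum_congr rfl
        (fun j hj => hvdiff i j (Finset.ne_of_mem_erase hj).symm),
      Finset.sum_const, Finset.card_erase_of_mem (Finset.mem_univ i), hcard,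
      Nat.add_sub_cancel, ← WithTop.coe_nsmul, nsmul_eq_mul]
  have hdegq : q.degree < ((Finset.univ : Finset (Fin (d + 1))).card : WithBot ℕ) := by
    rw [degree_eq_natDegree hqm.ne_zero, hqd, hcard]
    exact_mod_cast Nat.lt_succ_self d
  have hinterp := Lagrange.eq_interpolate hvinj hdegq
  -- leading coefficient of the Lagrange basis polynomials
  have hb : ∀ i, (Lagrange.basis Finset.univ v i).coeff d = (D i)⁻¹ := by
    intro i
    have hnd : (Lagrange.basis Finset.univ v i).natDegree = d := by
      rw [Lagrange.natDegree_basis hvinj (Finset.mem_univ i), hcard]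
      omega
    have : (Lagrange.basis Finset.univ v i).coeff d =
        (Lagrange.basis Finset.univ v i).leadingCoeff := by
      rw [Polynomial.leadingCoeff, hnd]
    rw [this, Lagrange.basis, leadingCoeff_prod]
    rw [hD, ← Finset.prod_inv_distrib]
    refine Finset.prod_congr rfl fun j hj => ?_
    rw [Lagrange.basisDivisor, leadingCoeff_mul, leadingCoeff_C,
      (monic_X_sub_C (v j)).leadingCoeff, mul_one]
  -- key identity from comparing leading coefficients
  have hkey : (1 : HahnSeries ℚ L) = ∑ i, q.eval (v i) * (D i)⁻¹ := by
    have h1 := congrArg (fun p => Polynomial.coeff p d) hinterp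
    simp only [Lagrange.interpolate_apply, Polynomial.finset_sum_coeff,
      Polynomial.coeff_C_mul] at h1
    have h2 : q.coeff d = 1 := by
      rw [← hqd]
      exact hqm.coeff_natDegree
    rw [h2] at h1
    rw [h1]
    exact Finset.sum_congr rfl fun i _ => by rw [hb i]
  -- multiply through by the product of all the D i
  have hP : (∏ i, D i) = ∑ i, q.eval (v i) * ∏ k ∈ Finset.univ.erase i, D k := by
    calc (∏ i, D i) = (∑ i, q.eval (v i) * (D i)⁻¹) * ∏ i, D i := by
          rw [← hkey, one_mul]
    _ = ∑ i, q.eval (v i) * (D i)⁻¹ * ∏ j, D j := by rw [Finset.sum_mul]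
    _ = ∑ i, q.eval (v i) * ∏ k ∈ Finset.univ.erase i, D k := by
          refine Finset.sum_congr rfl fun i _ => ?_
          rw [← Finset.mul_prod_erase Finset.univ D (Finset.mem_univ i)]
          field_simp [hDne i]
  -- order of the left-hand side
  have hordP : (∏ i, D i).orderTop = (((d + 1) * (d * t) : ℚ) : WithTop ℚ) := by
    rw [hahn_orderTop_prod _ _ (fun i _ => hDne i),
      Finset.sum_congr rfl (fun i _ => hDord i), Finset.sum_const, hcard,
      ← WithTop.coe_nsmul, nsmul_eq_mul]
    exact congrArg _ (by push_cast; ring)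
  -- order of the right-hand side is strictly bigger
  have hbig : (((d + 1) * (d * t) : ℚ) : WithTop ℚ) <
      (∑ i, q.eval (v i) * ∏ k ∈ Finset.univ.erase i, D k).orderTop := by
    refine hahn_lt_orderTop_sum _ _ (WithTop.coe_ne_top) fun i _ => ?_
    have hM : (∏ k ∈ Finset.univ.erase i, D k).orderTop =
        ((d * (d * t) : ℚ) : WithTop ℚ) := by
      rw [hahn_orderTop_prod _ _ (fun k _ => hDne k),
        Finset.sum_congr rfl (fun k _ => hDord k), Finset.sum_const,
        Finset.card_erase_of_mem (Finset.mem_univ i), hcard, Nat.add_sub_cancel,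
        ← WithTop.coe_nsmul, nsmul_eq_mul]
    refine lt_of_lt_of_le ?_ HahnSeries.orderTop_add_le_mul
    rw [hM]
    have := WithTop.add_lt_add_right (WithTop.coe_ne_top (a := (d * (d * t) : ℚ)))
      (hqv (Fin.castLE hdm i))
    refine lt_of_le_of_lt (le_of_eq ?_) this
    rw [← WithTop.coe_add]
    exact congrArg _ (by push_cast; ring)
  rw [hP] at hordP
  rw [hordP] at hbig
  exact lt_irrefl _ hbig
end
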